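/- arXiv:2604.20139 — 7 statements merged into one kernel-verified Lean document; each statement's English description precedes it below -/
import Mathlib

section
/- Define P_{m,n}(k) = ∏_{j=1}^{m-1} (1 - k/(n-j)) for integers 1 ≤ m ≤ n and 0 ≤ k ≤ n - m. For integers r ≥ 1, L ≥ 1, θ ∈ (0,1) with L ≤ r·θ·n/m, m - 1 - r ≥ 0, and any integer t with 0 ≤ t < θ·n/m and (r+1)·θ·n/m ≤ n - t - L as well as t ≤ n - m and t ≤ (n-L) - (m-r), we have P_{m,n}(t) ≤ P_{m-r,n-L}(t). -/
open Finset

/-- `P_{m,n}(k) = ∏_{j=1}^{m-1} (1 - k/(n-j))`. -/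
noncomputable def Pmn (m n k : ℕ) : ℝ :=
  ∏ j ∈ Finset.Icc 1 (m - 1), (1 - (k : ℝ) / ((n : ℝ) - (j : ℝ)))

lemma prod_div_telescope (g : ℕ → ℝ) (k : ℕ) (hg : ∀ i ≤ k, g i ≠ 0) :
    ∏ i ∈ Finset.range k, g (i + 1) / g i = g k / g 0 := by
  induction k with
  | zero => rw [Finset.prod_range_zero, div_self (hg 0 le_rfl)]
  | succ k ih =>
    have hk : g k ≠ 0 := hg k (Nat.le_succ k)
    have h0 : g 0 ≠ 0 := hg 0 (Nat.zero_le _)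
    rw [Finset.prod_range_succ, ih (fun i hi => hg i (hi.trans (Nat.le_succ k)))]
    field_simp

lemma Pmn_succ (m n t : ℕ) (hm : 1 ≤ m) (h : m + t + 1 ≤ n) :
    Pmn m n (t + 1) = Pmn m n t * (((n:ℝ) - m - t) / ((n:ℝ) - 1 - t)) := by
  set g : ℕ → ℝ := fun i => (n:ℝ) - (t:ℝ) - ((i:ℝ) + 1) with hg
  have key : ∀ j ∈ Finset.Icc 1 (m-1),
      (1 - ((t+1 : ℕ) : ℝ) / ((n:ℝ) - (j:ℝ))) =
      (1 - (t:ℝ)/((n:ℝ)-(j:ℝ))) * ((((n:ℝ) - (t:ℝ) - ((j:ℝ)+1))) / ((n:ℝ) - (t:ℝ) - (j:ℝ))) := by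
    intro j hj
    obtain ⟨hj1, hj2⟩ := Finset.mem_Icc.mp hj
    have hjn : (j:ℝ) + (t:ℝ) + 2 ≤ (n:ℝ) := by
      have : j + t + 2 ≤ n := by omega
      exact_mod_cast this
    have hj1' : (1:ℝ) ≤ (j:ℝ) := by exact_mod_cast hj1
    have ht0 : (0:ℝ) ≤ t := Nat.cast_nonneg t
    have h1 : (n:ℝ) - (j:ℝ) ≠ 0 := by nlinarith
    have h2 : (n:ℝ) - (t:ℝ) - (j:ℝ) ≠ 0 := by nlinarith
    push_cast
    field_simp
    ring
  have hrw : Finset.Icc 1 (m-1) = Finset.map ⟨fun i => i + 1, add_left_injective 1⟩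
      (Finset.range (m-1)) := by
    ext x
    simp only [Finset.mem_Icc, Finset.mem_map, Finset.mem_range,
      Function.Embedding.coeFn_mk]
    constructor
    · rintro ⟨h1, h2⟩; exact ⟨x - 1, by omega, by omega⟩
    · rintro ⟨a, ha, rfl⟩; omega
  have tele : ∏ j ∈ Finset.Icc 1 (m-1),
      (((n:ℝ) - (t:ℝ) - ((j:ℝ)+1)) / ((n:ℝ) - (t:ℝ) - (j:ℝ)))
      = ((n:ℝ) - m - t) / ((n:ℝ) - 1 - t) := by
    have step1 : ∏ j ∈ Finset.Icc 1 (m-1),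
        (((n:ℝ) - (t:ℝ) - ((j:ℝ)+1)) / ((n:ℝ) - (t:ℝ) - (j:ℝ)))
        = ∏ i ∈ Finset.range (m-1), g (i+1) / g i := by
      rw [hrw, Finset.prod_map]
      refine Finset.prod_congr rfl ?_
      intro i _
      simp only [Function.Embedding.coeFn_mk, hg]
      push_cast
      ring_nf
    have hgne : ∀ i ≤ m - 1, g i ≠ 0 := by
      intro i hi
      have : i + t + 2 ≤ n := by omega
      have h' : (i:ℝ) + (t:ℝ) + 2 ≤ (n:ℝ) := by exact_mod_cast this
      simp only [hg]
      intro hc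
      nlinarith
    rw [step1, prod_div_telescope g (m-1) hgne]
    simp only [hg]
    have hm1 : ((m-1 : ℕ) : ℝ) = (m:ℝ) - 1 := by
      rw [Nat.cast_sub hm]; norm_num
    rw [hm1]
    push_cast
    ring_nf
  rw [Pmn, Pmn, Finset.prod_congr rfl key, Finset.prod_mul_distrib, tele]

lemma Pmn_eq (m n : ℕ) (hm : 1 ≤ m) :
    ∀ t, m + t ≤ n →
    Pmn m n t = ∏ i ∈ Finset.range t, (((n:ℝ) - m - i) / ((n:ℝ) - 1 - i)) := by
  intro t
  induction t with
  | zero => intro _; simp [Pmn]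
  | succ t ih =>
    intro h
    rw [Pmn_succ m n t hm (by omega), ih (by omega), Finset.prod_range_succ]

/-- Monotonicity `P_{m,n}(t) ≤ P_{m-r,n-L}(t)` under the stated constraints. -/
theorem Pmn_mono (m n r L t : ℕ) (θ : ℝ) (hθ0 : 0 < θ) (hθ1 : θ < 1)
    (hm : 1 ≤ m) (hmn : m ≤ n) (hr : 1 ≤ r) (hL : 1 ≤ L)
    (hLr : (L : ℝ) ≤ r * (θ * n / m)) (hmr : r ≤ m - 1)
    (ht : (t : ℝ) < θ * n / m)
    (hcap : (r + 1 : ℝ) * (θ * n / m) ≤ (n : ℝ) - t - L)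
    (htnm : t ≤ n - m) (htnL : t ≤ (n - L) - (m - r)) :
    Pmn m n t ≤ Pmn (m - r) (n - L) t := by
  rcases Nat.eq_zero_or_pos t with ht0 | ht1
  · subst ht0; simp [Pmn]
  · -- natural-number facts
    have hrm : r ≤ m := by omega
    have hrm1 : r + 1 ≤ m := by omega
    have hnm : m + t ≤ n := by omega
    have hnL : L + (m - r) + t ≤ n := by omega
    have hLn : L ≤ n := by omega
    rw [Pmn_eq m n hm t (by omega),
        Pmn_eq (m-r) (n-L) (by omega) t (by omega)]
    push_cast [Nat.cast_sub hrm, Nat.cast_sub hLn]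
    -- real-number facts
    have hm0 : (0:ℝ) < m := by exact_mod_cast hm
    have hr0 : (0:ℝ) ≤ r := Nat.cast_nonneg r
    have hn0 : (0:ℝ) < n := by exact_mod_cast (by omega : 0 < n)
    have hnm' : (m:ℝ) + t ≤ n := by exact_mod_cast hnm
    have hnL' : (L:ℝ) + ((m:ℝ) - r) + t ≤ n := by
      have := hnL
      have h' : ((L + (m - r) + t : ℕ) : ℝ) ≤ (n:ℝ) := by exact_mod_cast this
      push_cast [Nat.cast_sub hrm] at h'
      linarith
    have ht1' : (1:ℝ) ≤ t := by exact_mod_cast ht1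
    have hrm1' : (r:ℝ) + 1 ≤ m := by exact_mod_cast hrm1
    have hθn : θ * n ≤ n := by nlinarith
    have e1 : ((m:ℝ) - 1) * (r * (θ * n / m)) = r * (θ * n) - r * (θ * n / m) := by
      field_simp
    have hkey : ((m:ℝ) - 1) * L ≤ r * ((n:ℝ) - t) := by
      have h1 : ((m:ℝ) - 1) * L ≤ ((m:ℝ) - 1) * (r * (θ * n / m)) :=
        mul_le_mul_of_nonneg_left hLr (by linarith)
      have h2 : r * (θ * n) ≤ r * n := mul_le_mul_of_nonneg_left hθn hr0
      have h3 : r * (t:ℝ) ≤ r * (θ * n / m) := mul_le_mul_of_nonneg_left ht.le hr0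
      linarith [e1 ▸ h1]
    apply Finset.prod_le_prod
    · intro i hi
      have hi' : (i:ℝ) + 1 ≤ t := by exact_mod_cast Finset.mem_range.mp hi
      apply div_nonneg <;> linarith
    · intro i hi
      have hi' : (i:ℝ) + 1 ≤ t := by exact_mod_cast Finset.mem_range.mp hi
      have hd1 : (0:ℝ) < (n:ℝ) - 1 - i := by linarith
      have hd2 : (0:ℝ) < (n:ℝ) - L - 1 - i := by linarith
      rw [div_le_div_iff₀ hd1 hd2]
      nlinarith [mul_nonneg hr0 (by linarith : (0:ℝ) ≤ (t:ℝ) - 1 - i)]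
end

section
/- Fix β > e. There exists a constant C > 0 such that for all k ≥ 1, if S_k ~ Gamma(k,1), then P(S_k ≤ k/β) ≤ (C/√k) · exp(-k(1/β + ln β - 1)). -/
open MeasureTheory Real

private lemma aux_stirling : ∃ c:ℝ, 0 < c ∧ ∀ m:ℕ, 1 ≤ m →
    c * (Real.sqrt (2*m) * ((m:ℝ)/Real.exp 1)^m) ≤ (Nat.factorial m : ℝ) := by
  obtain ⟨c, hc, h⟩ := Stirling.stirlingSeq'_bounded_by_pos_constant
  refine ⟨c, hc, fun m hm => ?_⟩
  obtain ⟨n, rfl⟩ : ∃ n, m = n + 1 := ⟨m-1, (Nat.succ_pred_eq_of_pos hm).symm⟩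
  have := h n
  rw [Stirling.stirlingSeq] at this
  have hd : 0 < Real.sqrt (2*((n+1:ℕ):ℝ)) * (((n+1:ℕ):ℝ)/Real.exp 1)^(n+1) := by
    have : (0:ℝ) < ((n+1:ℕ):ℝ) := by positivity
    positivity
  rw [le_div_iff₀ hd] at this
  push_cast at this ⊢
  linarith

private lemma aux_pow_succ (m : ℕ) (hm : 1 ≤ m) :
    ((m:ℝ)+1)^m ≤ Real.exp 1 * (m:ℝ)^m := by
  have hm0 : (0:ℝ) < m := by exact_mod_cast hm
  have h1 : ((m:ℝ)+1)^m = (m:ℝ)^m * (1 + 1/m)^m := by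
    rw [← mul_pow]; ring_nf; rw [mul_inv_cancel₀ (ne_of_gt hm0)]; ring_nf
  have h2 : (1 + 1/(m:ℝ))^m ≤ Real.exp 1 := by
    have := Real.add_one_le_exp (1/(m:ℝ))
    calc (1 + 1/(m:ℝ))^m ≤ (Real.exp (1/m))^m := by
          apply pow_le_pow_left₀ (by positivity) (by linarith)
      _ = Real.exp 1 := by
          rw [← Real.exp_nat_mul]
          congr 1; field_simp
  calc ((m:ℝ)+1)^m = (m:ℝ)^m * (1+1/m)^m := h1
    _ ≤ (m:ℝ)^m * Real.exp 1 := by apply mul_le_mul_of_nonneg_left h2 (by positivity)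
    _ = _ := mul_comm _ _

private lemma aux_exp_integral (b t : ℝ) (hb : 0 < b) (ht : 0 ≤ t) :
    ∫ x in Set.Icc (0:ℝ) t, Real.exp (b*(x-t)) ≤ 1/b := by
  rw [MeasureTheory.integral_Icc_eq_integral_Ioc, ← intervalIntegral.integral_of_le ht]
  have hderiv : ∀ x ∈ Set.uIcc (0:ℝ) t,
      HasDerivAt (fun y => Real.exp (b*(y-t))/b) (Real.exp (b*(x-t))) x := by
    intro x _
    have h1 : HasDerivAt (fun y : ℝ => b*(y-t)) b x := by
      simpa using ((hasDerivAt_id x).sub_const t).const_mul b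
    have h2 := (h1.exp).div_const b
    exact h2.congr_deriv (mul_div_cancel_right₀ _ hb.ne')
  rw [intervalIntegral.integral_eq_sub_of_hasDerivAt hderiv (by
    apply Continuous.intervalIntegrable; continuity)]
  simp only [sub_self, mul_zero, Real.exp_zero]
  have h2 : 0 < Real.exp (b*(0-t)) := Real.exp_pos _
  rw [div_sub_div_same, div_le_div_iff_of_pos_right hb]
  linarith

private lemma aux_pointwise (c t x αs : ℝ) (hc : 1 ≤ c) (ht : 0 < t) (hx : 0 ≤ x) (hxt : x ≤ t)
    (hct : 1 + αs ≤ c/t) :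
    x ^ c * Real.exp (-x) ≤ t ^ c * Real.exp (-t) * Real.exp (αs*(x-t)) := by
  rcases eq_or_lt_of_le hx with rfl | hx0
  · rw [Real.zero_rpow (by linarith), zero_mul]
    have h0 : (0:ℝ) ≤ t ^ c := Real.rpow_nonneg ht.le c
    positivity
  · have hlog : Real.log (x/t) ≤ x/t - 1 := Real.log_le_sub_one_of_pos (by positivity)
    have hlog2 : Real.log x - Real.log t ≤ (x-t)/t := by
      rw [← Real.log_div (ne_of_gt hx0) (ne_of_gt ht)]
      calc Real.log (x/t) ≤ x/t - 1 := hlog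
        _ = (x-t)/t := by field_simp
    have hkey : c * Real.log x - x ≤ c * Real.log t - t + αs*(x-t) := by
      have h3 : c * (Real.log x - Real.log t) ≤ c * ((x-t)/t) :=
        mul_le_mul_of_nonneg_left hlog2 (by linarith)
      have h4 : c * ((x-t)/t) = (c/t) * (x-t) := by ring
      have h5 : (c/t) * (x-t) ≤ (1+αs) * (x-t) := by
        apply mul_le_mul_of_nonpos_right hct (by linarith)
      nlinarith
    calc x ^ c * Real.exp (-x) = Real.exp (c * Real.log x - x) := by
          rw [Real.rpow_def_of_pos hx0, Real.exp_sub, mul_comm c (Real.log x),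
            Real.exp_neg, div_eq_mul_inv]
      _ ≤ Real.exp (c * Real.log t - t + αs*(x-t)) := Real.exp_le_exp.mpr hkey
      _ = t ^ c * Real.exp (-t) * Real.exp (αs*(x-t)) := by
          rw [Real.rpow_def_of_pos ht, Real.exp_add, Real.exp_sub, mul_comm c (Real.log t),
            Real.exp_neg, div_eq_mul_inv]

private lemma aux_measure_bound (k : ℕ) (t M αs : ℝ) (hαs : 0 < αs) (hM : 0 ≤ M) (ht : 0 ≤ t)
    (hpt : ∀ x ∈ Set.Icc (0:ℝ) t,
      ProbabilityTheory.gammaPDF k 1 x ≤ ENNReal.ofReal (M * Real.exp (αs*(x-t)))) :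
    ProbabilityTheory.gammaMeasure k 1 (Set.Iic t) ≤ ENNReal.ofReal (M / αs) := by
  have hint : ∫ x in Set.Icc (0:ℝ) t, Real.exp (αs*(x-t)) ≤ 1/αs := aux_exp_integral αs t hαs ht
  have hsub : Set.Iic t ⊆ Set.Iio 0 ∪ Set.Icc 0 t := by
    intro x hx
    rcases lt_or_ge x 0 with h | h
    · exact Or.inl h
    · exact Or.inr ⟨h, hx⟩
  calc ProbabilityTheory.gammaMeasure k 1 (Set.Iic t)
      ≤ ProbabilityTheory.gammaMeasure k 1 (Set.Iio 0 ∪ Set.Icc 0 t) := measure_mono hsub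
    _ ≤ ProbabilityTheory.gammaMeasure k 1 (Set.Iio 0)
          + ProbabilityTheory.gammaMeasure k 1 (Set.Icc 0 t) := measure_union_le _ _
    _ = 0 + ∫⁻ x in Set.Icc 0 t, ProbabilityTheory.gammaPDF k 1 x := by
        rw [ProbabilityTheory.gammaMeasure, withDensity_apply _ measurableSet_Iio,
          withDensity_apply _ measurableSet_Icc,
          ProbabilityTheory.lintegral_gammaPDF_of_nonpos le_rfl]
    _ = ∫⁻ x in Set.Icc 0 t, ProbabilityTheory.gammaPDF k 1 x := by rw [zero_add]
    _ ≤ ∫⁻ x in Set.Icc 0 t, ENNReal.ofReal (M * Real.exp (αs*(x-t))) := by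
        apply setLIntegral_mono (by measurability) hpt
    _ = ENNReal.ofReal (∫ x in Set.Icc 0 t, M * Real.exp (αs*(x-t))) := by
        rw [MeasureTheory.ofReal_integral_eq_lintegral_ofReal]
        · exact (Integrable.const_mul ((continuous_exp.comp (by continuity)).integrableOn_Icc) M)
        · filter_upwards with x
          positivity
    _ ≤ ENNReal.ofReal (M / αs) := by
        apply ENNReal.ofReal_le_ofReal
        rw [MeasureTheory.integral_const_mul]
        calc M * ∫ x in Set.Icc (0:ℝ) t, Real.exp (αs*(x-t)) ≤ M * (1/αs) :=
              mul_le_mul_of_nonneg_left hint hM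
          _ = M / αs := by ring

set_option maxHeartbeats 1000000 in
/-- For `β > e` there is `C > 0` with
`P(S_k ≤ k/β) ≤ (C/√k) exp(-k(1/β + ln β - 1))` for all `k ≥ 1`,
where `S_k ~ Gamma(k,1)`. -/
theorem gamma_tail_upper (β : ℝ) (hβ : Real.exp 1 < β) :
    ∃ C : ℝ, 0 < C ∧ ∀ k : ℕ, 1 ≤ k →
      ProbabilityTheory.gammaMeasure k 1 (Set.Iic ((k : ℝ) / β)) ≤
        ENNReal.ofReal
          (C / Real.sqrt k * Real.exp (-(k : ℝ) * (1 / β + Real.log β - 1))) := by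
  have he2 : (2:ℝ) < Real.exp 1 := by nlinarith [Real.exp_one_gt_d9]
  have hβ2 : (2:ℝ) < β := lt_trans he2 hβ
  have hβ0 : (0:ℝ) < β := by linarith
  obtain ⟨c0, hc0, hstir⟩ := aux_stirling
  set αs : ℝ := β/2 - 1 with hαs_def
  have hαs : 0 < αs := by rw [hαs_def]; linarith
  refine ⟨max β (β/(αs*c0)), lt_max_of_lt_left hβ0, fun k hk => ?_⟩
  set C : ℝ := max β (β/(αs*c0)) with hC_def
  have hCβ : β ≤ C := le_max_left _ _
  have hC2 : β/(αs*c0) ≤ C := le_max_right _ _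
  have hC0 : 0 < C := lt_of_lt_of_le hβ0 hCβ
  rcases eq_or_lt_of_le hk with hk1 | hk2
  · -- k = 1
    subst_vars
    have hβ1 : (1:ℝ) < β := by nlinarith [Real.exp_one_gt_d9]
    haveI : IsProbabilityMeasure (ProbabilityTheory.gammaMeasure ((1:ℕ):ℝ) 1) :=
      ProbabilityTheory.isProbabilityMeasure_gammaMeasure (by norm_num) one_pos
    calc ProbabilityTheory.gammaMeasure ((1:ℕ):ℝ) 1 (Set.Iic (((1:ℕ):ℝ)/β)) ≤ 1 := prob_le_one
      _ ≤ _ := by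
          rw [ENNReal.one_le_ofReal]
          have h1 : Real.sqrt ((1:ℕ):ℝ) = 1 := by norm_num
          have h2 : Real.exp (-((1:ℕ):ℝ) * (1/β + Real.log β - 1))
              = Real.exp (1 - 1/β) / β := by
            rw [show -((1:ℕ):ℝ) * (1/β + Real.log β - 1) = (1 - 1/β) - Real.log β by
              push_cast; ring, Real.exp_sub, Real.exp_log hβ0]
          rw [h1, h2]
          have h3 : (1:ℝ) ≤ Real.exp (1 - 1/β) := by
            apply Real.one_le_exp
            have : 1/β < 1 := by rw [div_lt_one hβ0]; linarith
            linarith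
          rw [← mul_div_assoc, le_div_iff₀ hβ0]
          nlinarith
  · -- k ≥ 2
    obtain ⟨m, rfl⟩ : ∃ m, k = m + 1 := ⟨k-1, by omega⟩
    have hm1 : 1 ≤ m := by omega
    have hm0 : (0:ℝ) < m := by exact_mod_cast hm1
    have hmR : (1:ℝ) ≤ (m:ℝ) := by exact_mod_cast hm1
    have hkR : ((m+1:ℕ):ℝ) = (m:ℝ)+1 := by push_cast; ring
    set t : ℝ := ((m+1:ℕ):ℝ)/β with ht_def
    have ht : 0 < t := by rw [ht_def]; positivity
    have hΓpos : 0 < Real.Gamma ((m+1:ℕ):ℝ) := Real.Gamma_pos_of_pos (by positivity)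
    have hΓ : Real.Gamma ((m+1:ℕ):ℝ) = (Nat.factorial m : ℝ) := by
      rw [hkR]; exact_mod_cast Real.Gamma_nat_eq_factorial m
    have hfac : (0:ℝ) < (Nat.factorial m : ℝ) := by
      exact_mod_cast Nat.factorial_pos m
    set M : ℝ := t^m * Real.exp (-t) / (Nat.factorial m : ℝ) with hM_def
    have hM : 0 ≤ M := by rw [hM_def]; positivity
    have hct : 1 + αs ≤ ((m:ℕ):ℝ)/t := by
      have h1 : ((m:ℕ):ℝ)/t = (m:ℝ)*β/((m:ℝ)+1) := by
        rw [ht_def, hkR]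
        field_simp
      rw [h1, hαs_def]
      rw [show (1:ℝ) + (β/2 - 1) = β/2 by ring, div_le_div_iff₀ (by norm_num) (by positivity)]
      nlinarith
    have hpt : ∀ x ∈ Set.Icc (0:ℝ) t,
        ProbabilityTheory.gammaPDF (m+1 : ℕ) 1 x ≤ ENNReal.ofReal (M * Real.exp (αs*(x-t))) := by
      intro x hx
      rw [ProbabilityTheory.gammaPDF_of_nonneg hx.1]
      apply ENNReal.ofReal_le_ofReal
      rw [Real.one_rpow, one_mul]
      have hcast : ((m+1:ℕ):ℝ) - 1 = ((m:ℕ):ℝ) := by push_cast; ring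
      rw [hcast]
      have hpw := aux_pointwise ((m:ℕ):ℝ) t x αs (by exact_mod_cast hm1) ht hx.1 hx.2 hct
      calc 1 / Real.Gamma ((m+1:ℕ):ℝ) * x ^ ((m:ℕ):ℝ) * Real.exp (-x)
          = (x ^ ((m:ℕ):ℝ) * Real.exp (-x)) * (1 / Real.Gamma ((m+1:ℕ):ℝ)) := by ring
        _ ≤ (t ^ ((m:ℕ):ℝ) * Real.exp (-t) * Real.exp (αs*(x-t)))
              * (1 / Real.Gamma ((m+1:ℕ):ℝ)) := by
            apply mul_le_mul_of_nonneg_right hpw (by positivity)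
        _ = M * Real.exp (αs*(x-t)) := by
            rw [Real.rpow_natCast, hΓ, hM_def]
            ring
    refine (aux_measure_bound (m+1) t M αs hαs hM ht.le hpt).trans (ENNReal.ofReal_le_ofReal ?_)
    -- final real inequality
    have hs1 := hstir m hm1
    have hs2 := aux_pow_succ m hm1
    have hs3 : Real.sqrt ((m:ℝ)+1) ≤ Real.sqrt (2*m) := Real.sqrt_le_sqrt (by linarith)
    have he1k : Real.exp 1 ^ (m+1) * ((m:ℝ)/Real.exp 1)^m = Real.exp 1 * (m:ℝ)^m := by
      rw [div_pow, pow_succ]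
      field_simp
    have hβC : β ≤ C * (αs * c0) := by
      rw [div_le_iff₀ (by positivity)] at hC2
      exact hC2
    have key : (Real.exp 1 * (m:ℝ)^m) * Real.sqrt (2*m) * β
        ≤ C * Real.exp 1 ^ (m+1) * (Nat.factorial m : ℝ) * αs := by
      calc (Real.exp 1 * (m:ℝ)^m) * Real.sqrt (2*m) * β
          ≤ (Real.exp 1 * (m:ℝ)^m) * Real.sqrt (2*m) * (C * (αs * c0)) := by
            apply mul_le_mul_of_nonneg_left hβC (by positivity)
        _ = (C*αs) * (c0 * (Real.sqrt (2*m) * ((m:ℝ)/Real.exp 1)^m)) * Real.exp 1 ^ (m+1) := by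
            rw [show Real.exp 1 * (m:ℝ)^m
              = Real.exp 1 ^ (m+1) * ((m:ℝ)/Real.exp 1)^m from he1k.symm]
            ring
        _ ≤ (C*αs) * (Nat.factorial m : ℝ) * Real.exp 1 ^ (m+1) := by
            apply mul_le_mul_of_nonneg_right
              (mul_le_mul_of_nonneg_left hs1 (by positivity)) (by positivity)
        _ = C * Real.exp 1 ^ (m+1) * (Nat.factorial m : ℝ) * αs := by ring
    have G : ((m:ℝ)+1)^m * Real.sqrt ((m:ℝ)+1) * β
        ≤ C * Real.exp 1 ^ (m+1) * (Nat.factorial m : ℝ) * αs := by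
      calc ((m:ℝ)+1)^m * Real.sqrt ((m:ℝ)+1) * β
          ≤ (Real.exp 1 * (m:ℝ)^m) * Real.sqrt (2*m) * β := by
            apply mul_le_mul_of_nonneg_right ?_ hβ0.le
            exact mul_le_mul hs2 hs3 (Real.sqrt_nonneg _) (by positivity)
        _ ≤ _ := key
    have hE : Real.exp (-((m+1:ℕ):ℝ)*(1/β+Real.log β-1))
        = Real.exp (-t) * Real.exp 1^(m+1) / β^(m+1) := by
      rw [show -((m+1:ℕ):ℝ)*(1/β+Real.log β-1)
          = (-t + ((m+1:ℕ):ℝ)*1) - ((m+1:ℕ):ℝ)*Real.log β by rw [ht_def]; ring,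
        Real.exp_sub, Real.exp_add, Real.exp_nat_mul, Real.exp_nat_mul,
        Real.exp_log hβ0]
    have hsq : 0 < Real.sqrt ((m+1:ℕ):ℝ) := Real.sqrt_pos.mpr (by positivity)
    have htm : t^m = ((m:ℝ)+1)^m/β^m := by rw [ht_def, hkR, div_pow]
    have hL : M/αs = (((m:ℝ)+1)^m * Real.exp (-t))/(β^m * (Nat.factorial m : ℝ) * αs) := by
      rw [hM_def, htm]
      field_simp
    have hR : C/Real.sqrt ((m+1:ℕ):ℝ) * (Real.exp (-t) * Real.exp 1^(m+1) / β^(m+1))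
        = (C*(Real.exp (-t) * Real.exp 1^(m+1)))/(Real.sqrt ((m+1:ℕ):ℝ) * β^(m+1)) := by
      ring
    have hden1 : (0:ℝ) < β^m * (Nat.factorial m : ℝ) * αs := by positivity
    have hden2 : (0:ℝ) < Real.sqrt ((m+1:ℕ):ℝ) * β^(m+1) := by positivity
    rw [hE, hL, hR, div_le_div_iff₀ hden1 hden2, pow_succ β m]
    have hsqeq : Real.sqrt ((m+1:ℕ):ℝ) = Real.sqrt ((m:ℝ)+1) := by rw [hkR]
    rw [hsqeq]
    nlinarith [mul_le_mul_of_nonneg_left G (show (0:ℝ) ≤ Real.exp (-t)*β^m by positivity),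
      Real.exp_pos (-t), pow_pos hβ0 m]
end

section
/- Fix β > e. There exists a constant c > 0 such that for all sufficiently large k, if S_k ~ Gamma(k,1) and w = k/β - ln(1+4k), then P(S_k ∈ [w-1, w]) ≥ c · k^{-1/2-β} · exp(-k(1/β + ln β - 1)). -/
open MeasureTheory Real

lemma gwl_log_le {y : ℝ} (hy : 0 < y) : Real.log y ≤ 4 * y ^ ((1:ℝ)/4) := by
  have h1 : Real.log (y ^ ((1:ℝ)/4)) = (1/4) * Real.log y := Real.log_rpow hy _
  have h2 := Real.log_le_sub_one_of_pos (Real.rpow_pos_of_pos hy ((1:ℝ)/4))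
  linarith

lemma gwl_log_one_sub {x : ℝ} (h2 : x ≤ 1/2) :
    -x - 2*x^2 ≤ Real.log (1 - x) := by
  have hx : (0:ℝ) < 1 - x := by linarith
  have h := Real.log_le_sub_one_of_pos (show (0:ℝ) < (1-x)⁻¹ by positivity)
  rw [Real.log_inv] at h
  have hb : (1-x)⁻¹ - 1 ≤ x + 2*x^2 := by
    rw [sub_le_iff_le_add, inv_le_iff_one_le_mul₀ hx]
    nlinarith
  linarith

lemma gwl_sqrt_two : Real.sqrt 2 ≤ 3/2 := by
  nlinarith [Real.sq_sqrt (show (0:ℝ) ≤ 2 by norm_num), Real.sqrt_nonneg 2]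

set_option maxHeartbeats 2000000 in
/-- For `β > e` there is `c > 0` such that for all large `k`, with
`w = k/β - ln(1+4k)`, `P(S_k ∈ [w-1, w]) ≥ c k^{-1/2-β} exp(-k(1/β + ln β - 1))`,
where `S_k ~ Gamma(k,1)`. -/
theorem gamma_window_lower (β : ℝ) (hβ : Real.exp 1 < β) :
    ∃ c : ℝ, 0 < c ∧ ∃ K : ℕ, ∀ k : ℕ, K ≤ k →
      ProbabilityTheory.gammaMeasure k 1
          (Set.Icc ((k : ℝ) / β - Real.log (1 + 4 * k) - 1)
            ((k : ℝ) / β - Real.log (1 + 4 * k))) ≥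
        ENNReal.ofReal
          (c * (k : ℝ) ^ (-(1 : ℝ) / 2 - β) *
            Real.exp (-(k : ℝ) * (1 / β + Real.log β - 1))) := by
  have he1 : (1:ℝ) < Real.exp 1 := by
    have := Real.exp_one_gt_d9; linarith
  have hb1 : (1: ℝ) < β := lt_trans he1 hβ
  have hβ0 : (0:ℝ) < β := by linarith
  set c : ℝ := β * Real.exp (-(β+1)) * (5:ℝ) ^ ((1:ℝ)-β) / 3 with hcdef
  have hcpos : 0 < c := by positivity
  refine ⟨c, hcpos, ?_⟩
  have hsqpi : Real.sqrt π < 2 := by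
    nlinarith [Real.sq_sqrt Real.pi_pos.le, Real.sqrt_nonneg π, Real.pi_lt_d2]
  have hst : ∀ᶠ k : ℕ in Filter.atTop, Stirling.stirlingSeq k ≤ 2 :=
    Stirling.tendsto_stirlingSeq_sqrt_pi.eventually (eventually_le_nhds hsqpi)
  have hbig : ∀ᶠ k : ℕ in Filter.atTop, max 1 ⌈(16*β)^4⌉₊ ≤ k :=
    Filter.eventually_ge_atTop _
  rw [← Filter.eventually_atTop]
  filter_upwards [hst, hbig] with k hstk hk
  have hk1 : 1 ≤ k := le_trans (le_max_left _ _) hk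
  have hKc : ((16*β)^4 : ℝ) ≤ (k:ℝ) := by
    have h := le_trans (le_max_right _ _) hk
    exact le_trans (Nat.le_ceil _) (Nat.cast_le.mpr h)
  set K : ℝ := (k:ℝ) with hKdef
  have hK1 : (1:ℝ) ≤ K := by rw [hKdef]; exact_mod_cast hk1
  have hK0 : (0:ℝ) < K := by linarith
  set lk : ℝ := Real.log K with hlkdef
  set b : ℝ := Real.log β with hbdef
  set L : ℝ := Real.log (1 + 4*K) with hLdef
  set W : ℝ := K/β - L with hWdef
  set A : ℝ := K/β - L - 1 with hAdef
  set Q : ℝ := K ^ ((1:ℝ)/4) with hQdef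
  set s : ℝ := K ^ ((1:ℝ)/2) with hsdef
  have hlk0 : 0 ≤ lk := Real.log_nonneg hK1
  have hQ : 16*β ≤ Q := by
    have h0 : (0:ℝ) ≤ 16*β := by positivity
    calc 16*β = ((16*β)^4) ^ ((1:ℝ)/4) := by
          rw [← Real.rpow_natCast (16*β) 4, ← Real.rpow_mul h0]; norm_num
      _ ≤ Q := Real.rpow_le_rpow (by positivity) hKc (by norm_num)
  have hQ1 : 1 ≤ Q := by
    calc (1:ℝ) = 1 ^ ((1:ℝ)/4) := (Real.one_rpow _).symm
      _ ≤ Q := Real.rpow_le_rpow zero_le_one hK1 (by norm_num)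
  have hQQ : Q * Q = s := by
    rw [hQdef, hsdef, ← Real.rpow_add hK0]; norm_num
  have hss : s * s = K := by
    rw [hsdef, ← Real.rpow_add hK0]; norm_num
  have hs1 : 1 ≤ s := by nlinarith [hQ1, hQQ]
  have hsK : s ≤ K := by
    calc s ≤ K ^ (1:ℝ) := Real.rpow_le_rpow_of_exponent_le hK1 (by norm_num)
      _ = K := Real.rpow_one K
  have hL0 : 0 ≤ L := Real.log_nonneg (by linarith)
  have hL5 : Real.log 5 ≤ L := Real.log_le_log (by norm_num) (by linarith)
  have hLlog : L ≤ Real.log 5 + lk := by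
    calc L ≤ Real.log (5*K) := Real.log_le_log (by positivity) (by linarith)
      _ = Real.log 5 + lk := Real.log_mul (by norm_num) hK0.ne'
  have hLQ : L ≤ 6*Q := by
    have h54 : (5:ℝ)^((1:ℝ)/4) ≤ 3/2 := by
      calc (5:ℝ)^((1:ℝ)/4) ≤ ((3/2:ℝ)^(4:ℕ))^((1:ℝ)/4) :=
            Real.rpow_le_rpow (by norm_num) (by norm_num) (by norm_num)
        _ = 3/2 := by
            rw [← Real.rpow_natCast (3/2:ℝ) 4, ← Real.rpow_mul (by norm_num)]; norm_num
    have h1 : L ≤ 4 * (1+4*K) ^ ((1:ℝ)/4) := gwl_log_le (by linarith)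
    have h2 : (1+4*K:ℝ) ^ ((1:ℝ)/4) ≤ (5*K) ^ ((1:ℝ)/4) :=
      Real.rpow_le_rpow (by linarith) (by linarith) (by norm_num)
    have h3 : (5*K:ℝ) ^ ((1:ℝ)/4) = (5:ℝ)^((1:ℝ)/4) * Q :=
      Real.mul_rpow (by norm_num) hK0.le
    nlinarith [Real.rpow_nonneg hK0.le ((1:ℝ)/4)]
  -- P = β (L+1)
  set P : ℝ := β * (L + 1) with hPdef
  have hP0 : 0 ≤ P := mul_nonneg hβ0.le (by linarith)
  have hPs : 2*P ≤ s := by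
    have hL1 : L + 1 ≤ 7*Q := by linarith
    have t1 : 2*β*(L+1) ≤ 2*β*(7*Q) := mul_le_mul_of_nonneg_left hL1 (by positivity)
    have t2 : 16*β*Q ≤ Q*Q := mul_le_mul_of_nonneg_right hQ (by positivity)
    have hQ0 : (0:ℝ) ≤ Q := by positivity
    linarith [hPdef, hQQ, hs1]
  have hPK : 2*P ≤ K := by linarith
  set x : ℝ := P / K with hxdef
  have hx0 : 0 ≤ x := div_nonneg hP0 hK0.le
  have hxhalf : x ≤ 1/2 := by rw [hxdef, div_le_iff₀ hK0]; linarith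
  have hAx : 0 < 1 - x := by linarith
  have hA_eq : A = K/β * (1-x) := by
    rw [hAdef, hxdef, hPdef]; field_simp; ring
  have hApos : 0 < A := by rw [hA_eq]; positivity
  have hlogA : Real.log A = lk - b + Real.log (1-x) := by
    rw [hA_eq, Real.log_mul (by positivity) hAx.ne', Real.log_div hK0.ne' hβ0.ne']
  have h7 : -P - 1 ≤ (K-1) * Real.log (1-x) := by
    have hl := gwl_log_one_sub hxhalf
    have hln : Real.log (1-x) ≤ 0 := Real.log_nonpos (by linarith) (by linarith)
    have h9 : K * (-x - 2*x^2) ≤ K * Real.log (1-x) :=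
      mul_le_mul_of_nonneg_left hl hK0.le
    have e1 : K * (-x - 2*x^2) = -P - 2*(P^2/K) := by
      rw [hxdef]; field_simp
    have e3 : 2 * (P^2 / K) ≤ 1 := by
      have hsq := mul_self_le_mul_self (by linarith : (0:ℝ) ≤ 2*P) hPs
      have h4P : 4*P^2 ≤ K := by linarith [hsq, hss]
      rw [show 2*(P^2/K) = (2*P^2)/K by ring, div_le_one hK0]
      linarith
    rw [e1] at h9
    have h10 : (K-1) * Real.log (1-x) = K * Real.log (1-x) - Real.log (1-x) := by ring
    linarith [h9, hln, e3, h10]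
  -- factorial bound
  have hk0' : (0:ℝ) < (k:ℝ) := by exact_mod_cast hk1
  have hden : (Real.sqrt (2*(k:ℝ)) * (((k:ℝ))/Real.exp 1)^k) ≠ 0 :=
    mul_ne_zero (Real.sqrt_pos.mpr (by linarith)).ne'
      (pow_ne_zero _ (div_ne_zero hk0'.ne' (Real.exp_ne_zero 1)))
  have hfac : ((Nat.factorial k) : ℝ) = Stirling.stirlingSeq k * (Real.sqrt (2*K) * (K/Real.exp 1)^k) := by
    rw [hKdef, Stirling.stirlingSeq, div_mul_cancel₀ _ hden]
  have hsq2 : Real.sqrt 2 ≤ 3/2 := gwl_sqrt_two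
  have hfac2 : ((Nat.factorial k) : ℝ) ≤ 3 * Real.sqrt K * (K/Real.exp 1)^k := by
    have h2 : Real.sqrt (2*K) = Real.sqrt 2 * Real.sqrt K := Real.sqrt_mul (by norm_num) _
    rw [hfac, h2]
    have hp : (0:ℝ) ≤ (K/Real.exp 1)^k := by positivity
    have hsk : (0:ℝ) ≤ Real.sqrt K := Real.sqrt_nonneg K
    have hst0 : 0 ≤ Stirling.stirlingSeq k := by
      rw [Stirling.stirlingSeq]; positivity
    have hD : (0:ℝ) ≤ Real.sqrt K * (K/Real.exp 1)^k := by positivity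
    have t1 : Stirling.stirlingSeq k * (Real.sqrt 2 * (Real.sqrt K * (K/Real.exp 1)^k))
        ≤ 2 * (Real.sqrt 2 * (Real.sqrt K * (K/Real.exp 1)^k)) :=
      mul_le_mul_of_nonneg_right hstk (by positivity)
    have t2 : Real.sqrt 2 * (Real.sqrt K * (K/Real.exp 1)^k)
        ≤ (3/2) * (Real.sqrt K * (K/Real.exp 1)^k) :=
      mul_le_mul_of_nonneg_right hsq2 hD
    calc Stirling.stirlingSeq k * (Real.sqrt 2 * Real.sqrt K * (K/Real.exp 1)^k)
        = Stirling.stirlingSeq k * (Real.sqrt 2 * (Real.sqrt K * (K/Real.exp 1)^k)) := by ring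
      _ ≤ 2 * (Real.sqrt 2 * (Real.sqrt K * (K/Real.exp 1)^k)) := t1
      _ ≤ 2 * ((3/2) * (Real.sqrt K * (K/Real.exp 1)^k)) := by linarith
      _ = 3 * Real.sqrt K * (K/Real.exp 1)^k := by ring
  have hlogfac : Real.log ((Nat.factorial k) : ℝ) ≤ Real.log 3 + lk/2 + K*lk - K := by
    have hkf : (0:ℝ) < ((Nat.factorial k) : ℝ) := by exact_mod_cast Nat.factorial_pos k
    calc Real.log ((Nat.factorial k) : ℝ) ≤ Real.log (3 * Real.sqrt K * (K/Real.exp 1)^k) :=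
          Real.log_le_log hkf hfac2
      _ = Real.log 3 + lk/2 + K*(lk - 1) := by
          rw [Real.log_mul (by positivity) (by positivity),
            Real.log_mul (by norm_num) (by positivity), Real.log_pow,
            Real.log_div hK0.ne' (Real.exp_ne_zero 1), Real.log_sqrt hK0.le, Real.log_exp]
          try ring
      _ = Real.log 3 + lk/2 + K*lk - K := by ring
  set F : ℝ := ((Nat.factorial (k-1)) : ℝ) with hFdef
  have hF0 : (0:ℝ) < F := by rw [hFdef]; exact_mod_cast Nat.factorial_pos (k-1)
  have hFk : K * F = ((Nat.factorial k) : ℝ) := by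
    rw [hFdef, hKdef]
    exact_mod_cast congrArg (Nat.cast (R := ℝ)) (Nat.mul_factorial_pred (Nat.one_le_iff_ne_zero.mp hk1))
  have hlogF : Real.log F ≤ Real.log 3 + lk/2 + K*lk - K - lk := by
    have h := Real.log_mul hK0.ne' hF0.ne'
    rw [hFk] at h
    linarith [hlogfac, h.symm.le, h.le]
  have hΓ : Real.Gamma K = F := by
    have hcast : K = ((k-1:ℕ):ℝ) + 1 := by
      rw [hKdef, Nat.cast_sub hk1]; push_cast; ring
    rw [hcast, Real.Gamma_nat_eq_factorial, hFdef]
  -- main real inequality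
  have key : c * K ^ (-(1:ℝ)/2 - β) * Real.exp (-K * (1/β + b - 1)) ≤
      A ^ (K-1) * Real.exp (-W) / F := by
    have hT0 : (0:ℝ) < c * K ^ (-(1:ℝ)/2 - β) * Real.exp (-K * (1/β + b - 1)) := by positivity
    have hM0 : (0:ℝ) < A ^ (K-1) * Real.exp (-W) / F := by positivity
    rw [← Real.exp_log hT0, ← Real.exp_log hM0]
    apply Real.exp_le_exp.mpr
    have hlogT : Real.log (c * K ^ (-(1:ℝ)/2 - β) * Real.exp (-K * (1/β + b - 1))) =
        (b + (-(β+1)) + ((1:ℝ)-β)*Real.log 5 - Real.log 3) + (-(1:ℝ)/2 - β)*lk +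
          (-K * (1/β + b - 1)) := by
      rw [Real.log_mul (by positivity) (Real.exp_ne_zero _),
        Real.log_mul (by positivity) (by positivity), Real.log_exp,
        Real.log_rpow hK0, hcdef,
        Real.log_div (by positivity) (by norm_num),
        Real.log_mul (by positivity) (by positivity),
        Real.log_mul (by positivity) (Real.exp_ne_zero _), Real.log_exp]
      try rw [Real.log_rpow (by norm_num : (0:ℝ) < 5)]
      try ring
    have hlogM : Real.log (A ^ (K-1) * Real.exp (-W) / F) =
        (K-1) * (lk - b + Real.log (1-x)) + (-W) - Real.log F := by
      rw [Real.log_div (by positivity) hF0.ne',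
        Real.log_mul (by positivity) (Real.exp_ne_zero _), Real.log_exp,
        Real.log_rpow hApos, hlogA]
    rw [hlogT, hlogM, hWdef]
    have h8 : β * L ≤ β * (Real.log 5 + lk) := mul_le_mul_of_nonneg_left hLlog hβ0.le
    have hexp1 : (K-1) * (lk - b + Real.log (1-x)) =
        K*lk - K*b - lk + b + (K-1) * Real.log (1-x) := by ring
    have hexp2 : -K * (1/β + b - 1) = -(K/β) - K*b + K := by field_simp; ring
    rw [hexp1, hexp2]
    have hPexp : P = β*L + β := by rw [hPdef]; ring
    linarith [h7, hlogF, h8, hL5, hlk0]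
  -- measure bound
  have hpdf_meas : Measurable (ProbabilityTheory.gammaPDF K 1) :=
    (ProbabilityTheory.measurable_gammaPDFReal K 1).ennreal_ofReal
  have hmeasure : ProbabilityTheory.gammaMeasure K 1 (Set.Icc A W) =
      ∫⁻ y in Set.Icc A W, ProbabilityTheory.gammaPDF K 1 y := by
    rw [ProbabilityTheory.gammaMeasure, withDensity_apply _ measurableSet_Icc]
  have hvol : volume (Set.Icc A W) = 1 := by
    rw [Real.volume_Icc, hAdef, hWdef]
    norm_num
  have hpoint : ∀ y ∈ Set.Icc A W,
      ENNReal.ofReal (A ^ (K-1) * Real.exp (-W) / F) ≤ ProbabilityTheory.gammaPDF K 1 y := by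
    intro y hy
    obtain ⟨hy1, hy2⟩ := hy
    have hy0 : (0:ℝ) ≤ y := le_trans hApos.le hy1
    rw [ProbabilityTheory.gammaPDF_of_nonneg hy0]
    apply ENNReal.ofReal_le_ofReal
    rw [Real.one_rpow, one_mul, hΓ]
    have h1 : A ^ (K-1) ≤ y ^ (K-1) := Real.rpow_le_rpow hApos.le hy1 (by linarith)
    have h2 : Real.exp (-W) ≤ Real.exp (-y) := Real.exp_le_exp.mpr (by linarith)
    have h3 : (0:ℝ) ≤ y ^ (K-1) := Real.rpow_nonneg hy0 _
    calc A ^ (K-1) * Real.exp (-W) / F ≤ y ^ (K-1) * Real.exp (-y) / F := by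
          exact (div_le_div_iff_of_pos_right hF0).mpr
            (mul_le_mul h1 h2 (Real.exp_pos _).le h3)
      _ = 1 / F * y ^ (K-1) * Real.exp (-y) := by ring
  calc ENNReal.ofReal (c * K ^ (-(1:ℝ)/2 - β) * Real.exp (-K * (1/β + b - 1)))
      ≤ ENNReal.ofReal (A ^ (K-1) * Real.exp (-W) / F) := ENNReal.ofReal_le_ofReal key
    _ = ∫⁻ _ in Set.Icc A W, ENNReal.ofReal (A ^ (K-1) * Real.exp (-W) / F) := by
        rw [setLIntegral_const, hvol, mul_one]
    _ ≤ ∫⁻ y in Set.Icc A W, ProbabilityTheory.gammaPDF K 1 y :=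
        setLIntegral_mono hpdf_meas hpoint
    _ = ProbabilityTheory.gammaMeasure K 1 (Set.Icc A W) := hmeasure.symm
end

section
/- Fix β > e. Define J(β) = β(ln β - 1) and let π^{(k)}(n) denote the k-fold iterated parent of vertex n in a random recursive tree built by π(n) = ⌊n U_n⌋ with i.i.d. uniform U_n. There is a constant C > 0 (depending only on β) such that for all k ≥ 1 and n ≥ 1, P(π^{(k)}(n) ≥ n e^{-k/β}) ≤ (C/√k)·exp(-k(1/β + ln β - 1)). -/
open MeasureTheory Real

/-- `parentIter ω k x` is the `k`-fold iterated parent `π^{(k)}(x)` in the random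
recursive tree built from uniforms `ω`, where `π(m) = ⌊m ω_m⌋`. -/
noncomputable def parentIter (ω : ℕ → ℝ) : ℕ → ℕ → ℕ
  | 0, x => x
  | k + 1, x => parentIter ω k ⌊(x : ℝ) * ω x⌋₊

section Aux
open Finset


noncomputable def gpois (k : ℕ) (L : ℝ) : ℝ :=
  if 0 ≤ L then 1 - Real.exp (-L) * ∑ j ∈ Finset.range k, L ^ j / (j.factorial : ℝ) else 0

lemma gpois_nonneg (k : ℕ) (L : ℝ) : 0 ≤ gpois k L := by
  unfold gpois
  split_ifs with h
  · have h1 : Real.exp (-L) * ∑ j ∈ Finset.range k, L ^ j / (j.factorial : ℝ) ≤ 1 := by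
      have := Real.sum_le_exp_of_nonneg h k
      calc Real.exp (-L) * ∑ j ∈ Finset.range k, L ^ j / (j.factorial : ℝ)
          ≤ Real.exp (-L) * Real.exp L := by
            exact mul_le_mul_of_nonneg_left this (Real.exp_nonneg _)
        _ = 1 := by rw [← Real.exp_add]; simp
    linarith
  · exact le_refl 0

lemma gpois_le_one (k : ℕ) (L : ℝ) : gpois k L ≤ 1 := by
  unfold gpois
  split_ifs with h
  · have : 0 ≤ Real.exp (-L) * ∑ j ∈ Finset.range k, L ^ j / (j.factorial : ℝ) := by
      apply mul_nonneg (Real.exp_nonneg _)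
      apply Finset.sum_nonneg
      intro j _
      positivity
    linarith
  · norm_num

lemma gpois_nonpos_eq_zero {k : ℕ} (hk : 1 ≤ k) {L : ℝ} (hL : L ≤ 0) : gpois k L = 0 := by
  unfold gpois
  split_ifs with h
  · have : L = 0 := le_antisymm hL h
    subst this
    rw [Finset.sum_eq_single 0]
    · simp
    · intro j _ hj
      simp [zero_pow hj]
    · intro h0
      simp at h0
      omega
  · rfl

lemma hasDerivAt_gpois_aux (k : ℕ) (x : ℝ) :
    HasDerivAt (fun L => 1 - Real.exp (-L) * ∑ j ∈ range (k + 1), L ^ j / (j.factorial : ℝ))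
      (Real.exp (-x) * (x ^ k / (k.factorial : ℝ))) x := by
  have hS : HasDerivAt (fun L : ℝ => ∑ j ∈ range (k + 1), L ^ j / (j.factorial : ℝ))
      (∑ j ∈ range (k + 1), ((j : ℝ) * x ^ (j - 1)) / (j.factorial : ℝ)) x :=
    HasDerivAt.fun_sum fun j _ => (hasDerivAt_pow j x).div_const _
  have hE : HasDerivAt (fun L : ℝ => Real.exp (-L)) (-Real.exp (-x)) x := by
    simpa using (hasDerivAt_neg x).exp
  have h := (hE.mul hS).const_sub 1
  have hid : ∑ j ∈ range (k + 1), ((j : ℝ) * x ^ (j - 1)) / (j.factorial : ℝ)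
      = ∑ i ∈ range k, x ^ i / (i.factorial : ℝ) := by
    rw [Finset.sum_range_succ']
    simp only [Nat.cast_zero, zero_mul, Nat.factorial_zero, Nat.cast_one, zero_div, add_zero]
    apply Finset.sum_congr rfl
    intro i _
    rw [Nat.factorial_succ]
    have : ((i:ℝ) + 1) ≠ 0 := by positivity
    push_cast
    field_simp
  rw [hid] at h
  refine h.congr_deriv ?_
  rw [Finset.sum_range_succ]
  have hfac : (k.factorial : ℝ) ≠ 0 := by positivity
  ring

lemma gpois_zero_mono : Monotone (gpois 0) := by
  intro a b hab
  unfold gpois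
  simp only [Finset.range_zero, Finset.sum_empty, mul_zero, sub_zero]
  split_ifs with h1 h2 h2
  · norm_num
  · exact absurd (le_trans h1 hab) h2
  · norm_num
  · norm_num

lemma gpois_mono (k : ℕ) : Monotone (gpois k) := by
  cases k with
  | zero => exact gpois_zero_mono
  | succ k =>
    set f : ℝ → ℝ := fun L => 1 - Real.exp (-L) * ∑ j ∈ range (k + 1), L ^ j / (j.factorial : ℝ)
      with hf
    have hcont : Continuous f := by
      apply Continuous.sub continuous_const
      apply Continuous.mul (Real.continuous_exp.comp continuous_neg)
      exact continuous_finset_sum _ fun j _ => (continuous_pow j).div_const _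
    have hmono : MonotoneOn f (Set.Ici (0:ℝ)) := by
      apply monotoneOn_of_deriv_nonneg (convex_Ici 0) hcont.continuousOn
      · intro x _
        exact (hasDerivAt_gpois_aux k x).differentiableAt.differentiableWithinAt
      · intro x hx
        rw [interior_Ici] at hx
        rw [(hasDerivAt_gpois_aux k x).deriv]
        have hx' : (0:ℝ) ≤ x := le_of_lt hx
        positivity
    intro a b hab
    unfold gpois
    split_ifs with h1 h2 h2
    · exact hmono h1 h2 hab
    · exact absurd (le_trans h1 hab) h2
    · have := gpois_nonneg (k+1) b
      unfold gpois at this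
      rwa [if_pos h2] at this
    · exact le_refl 0

lemma gpois_measurable (k : ℕ) : Measurable (gpois k) := by
  unfold gpois
  exact Measurable.ite (measurableSet_le measurable_const measurable_id)
    ((continuous_const.sub ((Real.continuous_exp.comp continuous_neg).mul
      (continuous_finset_sum _ fun j _ => (continuous_pow j).div_const _))).measurable)
    measurable_const

lemma intervalIntegrable_gpois_comp (k : ℕ) {g : ℝ → ℝ} (hg : Measurable g) (a b : ℝ) :
    IntervalIntegrable (fun x => gpois k (g x)) volume a b := by
  apply IntervalIntegrable.mono_fun' (g := fun _ => (1:ℝ)) intervalIntegrable_const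
  · exact ((gpois_measurable k).comp hg).aestronglyMeasurable
  · apply Filter.Eventually.of_forall
    intro x
    show ‖gpois k (g x)‖ ≤ 1
    rw [Real.norm_eq_abs, abs_of_nonneg (gpois_nonneg _ _)]
    exact gpois_le_one _ _

lemma gpois_integral (k : ℕ) (L : ℝ) :
    ∫ x in (0:ℝ)..1, gpois k (L + Real.log x) = gpois (k + 1) L := by
  have hint : ∀ u v : ℝ, IntervalIntegrable (fun x => gpois k (L + Real.log x)) volume u v :=
    fun u v => intervalIntegrable_gpois_comp k (measurable_const.add Real.measurable_log) u v
  rcases lt_or_ge L 0 with hL | hL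
  · -- negative case : both sides zero
    rw [gpois_nonpos_eq_zero (by omega) (le_of_lt hL)]
    rw [intervalIntegral.integral_of_le zero_le_one, MeasureTheory.integral_Ioc_eq_integral_Ioo]
    rw [MeasureTheory.setIntegral_congr_fun (g := fun _ => (0:ℝ)) measurableSet_Ioo ?_,
      integral_zero]
    intro x hx
    have hlog : Real.log x < 0 := Real.log_neg hx.1 hx.2
    have hneg : ¬ (0 ≤ L + Real.log x) := not_le.mpr (by linarith)
    simp only [gpois, hneg, if_false]
  · set a := Real.exp (-L) with ha
    have ha0 : 0 < a := Real.exp_pos _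
    have ha1 : a ≤ 1 := Real.exp_le_one_iff.mpr (by linarith)
    have hloga : Real.log a = -L := Real.log_exp _
    have h1 : ∫ x in (0:ℝ)..a, gpois k (L + Real.log x) = 0 := by
      rw [intervalIntegral.integral_of_le (le_of_lt ha0),
        MeasureTheory.integral_Ioc_eq_integral_Ioo]
      rw [MeasureTheory.setIntegral_congr_fun (g := fun _ => (0:ℝ)) measurableSet_Ioo ?_,
        integral_zero]
      intro x hx
      have hlog : Real.log x < -L := by
        have := Real.log_lt_log hx.1 hx.2
        rwa [hloga] at this
      have hneg : ¬ (0 ≤ L + Real.log x) := not_le.mpr (by linarith)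
      simp only [gpois, hneg, if_false]
    set Φ : ℝ → ℝ := fun x =>
      x - Real.exp (-L) * ∑ j ∈ range k, (L + Real.log x) ^ (j+1) / ((j+1).factorial : ℝ)
      with hΦ
    have h2 : ∫ x in a..1, gpois k (L + Real.log x) = Φ 1 - Φ a := by
      apply intervalIntegral.integral_eq_sub_of_hasDerivAt ?_ (hint a 1)
      intro x hx
      rw [Set.uIcc_of_le ha1] at hx
      have hx0 : 0 < x := lt_of_lt_of_le ha0 hx.1
      have hxlog : 0 ≤ L + Real.log x := by
        have : Real.log a ≤ Real.log x := Real.log_le_log (by positivity) hx.1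
        rw [hloga] at this
        linarith
      have hlog : HasDerivAt (fun u : ℝ => L + Real.log u) x⁻¹ x :=
        (Real.hasDerivAt_log (ne_of_gt hx0)).const_add L
      have hterm : ∀ j ∈ range k, HasDerivAt
          (fun u : ℝ => (L + Real.log u) ^ (j+1) / ((j+1).factorial : ℝ))
          ((((j:ℝ)+1) * (L + Real.log x) ^ j * x⁻¹) / ((j+1).factorial : ℝ)) x := by
        intro j _
        have := (hlog.pow (j+1)).div_const ((j+1).factorial : ℝ)
        simpa using this
      have hsum := HasDerivAt.fun_sum hterm
      have hD := (hasDerivAt_id x).sub ((hsum.const_mul (Real.exp (-L))))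
      have hval : (1:ℝ) - Real.exp (-L) *
          ∑ j ∈ range k, (((j:ℝ)+1) * (L + Real.log x) ^ j * x⁻¹) / ((j+1).factorial : ℝ)
          = gpois k (L + Real.log x) := by
        unfold gpois
        rw [if_pos hxlog]
        congr 1
        have hexp : Real.exp (-(L + Real.log x)) = Real.exp (-L) * x⁻¹ := by
          rw [neg_add, Real.exp_add]
          congr 1
          rw [Real.exp_neg, Real.exp_log hx0]
        rw [hexp, mul_assoc]
        congr 1
        rw [Finset.mul_sum]
        apply Finset.sum_congr rfl
        intro j _
        rw [Nat.factorial_succ]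
        have hj : ((j:ℝ)+1) ≠ 0 := by positivity
        have hfj : ((j.factorial : ℝ)) ≠ 0 := by positivity
        push_cast
        field_simp
      rw [hval] at hD
      exact hD
    have hsplit := intervalIntegral.integral_add_adjacent_intervals (hint 0 a) (hint a 1)
    rw [← hsplit, h1, h2, zero_add]
    have hΦ1 : Φ 1 = 1 - Real.exp (-L) * ∑ j ∈ range k, L ^ (j+1) / ((j+1).factorial : ℝ) := by
      simp only [hΦ, Real.log_one, add_zero]
    have hΦa : Φ a = a := by
      simp only [hΦ, hloga, add_neg_cancel]
      have : ∑ j ∈ range k, (0:ℝ) ^ (j+1) / ((j+1).factorial : ℝ) = 0 := by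
        apply Finset.sum_eq_zero
        intro j _
        rw [zero_pow (Nat.succ_ne_zero j)]
        simp
      rw [this, mul_zero, sub_zero]
    rw [hΦ1, hΦa]
    unfold gpois
    rw [if_pos hL, Finset.sum_range_succ']
    simp only [pow_zero, Nat.factorial_zero, Nat.cast_one]
    ring

lemma gpois_tail_bound {β : ℝ} (hβ : Real.exp 1 < β) :
    ∃ C : ℝ, 0 < C ∧ ∀ k : ℕ, 1 ≤ k →
      gpois k ((k:ℝ)/β) ≤ C / Real.sqrt k * Real.exp (-(k:ℝ) * (1/β + Real.log β - 1)) := by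
  have he1 : (1:ℝ) < Real.exp 1 := by
    have := Real.exp_one_gt_d9; linarith
  have hβ1 : (1:ℝ) < β := lt_trans he1 hβ
  have hβ0 : (0:ℝ) < β := by linarith
  have h1β : (0:ℝ) < 1 - 1/β := by
    have : 1/β < 1 := (div_lt_one hβ0).mpr hβ1
    linarith
  obtain ⟨a, ha, hstir⟩ := Stirling.stirlingSeq'_bounded_by_pos_constant
  refine ⟨(1 - 1/β)⁻¹ / (a * Real.sqrt 2), by positivity, ?_⟩
  intro k hk
  have hk0 : (0:ℝ) < (k:ℝ) := by exact_mod_cast hk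
  set t := (k:ℝ)/β with ht
  have ht0 : (0:ℝ) < t := by positivity
  have hfacpos : (0:ℝ) < (k.factorial : ℝ) := by exact_mod_cast k.factorial_pos
  -- step 1: rewrite gpois as exp(-t) * tail
  have hgp : gpois k t = Real.exp (-t) *
      (Real.exp t - ∑ j ∈ Finset.range k, t ^ j / (j.factorial : ℝ)) := by
    unfold gpois
    rw [if_pos (le_of_lt ht0), mul_sub, ← Real.exp_add]
    simp
  -- step 2: tail as tsum
  have hsum : Summable (fun n : ℕ => t ^ n / (n.factorial : ℝ)) :=
    Real.summable_pow_div_factorial t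
  have htail : Real.exp t - ∑ j ∈ Finset.range k, t ^ j / (j.factorial : ℝ)
      = ∑' i : ℕ, t ^ (i + k) / (((i + k).factorial : ℕ) : ℝ) := by
    have hexp : Real.exp t = ∑' n : ℕ, t ^ n / (n.factorial : ℝ) := by
      rw [Real.exp_eq_exp_ℝ, NormedSpace.exp_eq_tsum_div]
    rw [hexp, ← Summable.sum_add_tsum_nat_add k hsum]
    ring
  -- step 3: geometric bound on the tail
  have hterm : ∀ i : ℕ, t ^ (i + k) / (((i + k).factorial : ℕ) : ℝ)
      ≤ (t ^ k / (k.factorial : ℝ)) * (1/β) ^ i := by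
    intro i
    have hfact : (k.factorial : ℝ) * (k:ℝ) ^ i ≤ (((i + k).factorial : ℕ) : ℝ) := by
      have h1 : k.factorial * k ^ i ≤ k.factorial * (k + 1) ^ i :=
        Nat.mul_le_mul_left _ (Nat.pow_le_pow_left (Nat.le_succ k) i)
      have h2 : k.factorial * (k + 1) ^ i ≤ (k + i).factorial :=
        Nat.factorial_mul_pow_le_factorial
      have h3 : k.factorial * k ^ i ≤ (i + k).factorial := by
        rw [Nat.add_comm i k]; exact le_trans h1 h2
      exact_mod_cast h3
    have hrhs : (t ^ k / (k.factorial : ℝ)) * (1/β) ^ i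
        = (t ^ k * t ^ i) / ((k.factorial : ℝ) * (k:ℝ) ^ i) := by
      have hβk : (1:ℝ)/β = t / (k:ℝ) := by
        rw [ht]; field_simp
      rw [hβk, div_pow]
      field_simp
      rw [← mul_pow, div_mul_cancel₀ _ (ne_of_gt hk0)]
    rw [pow_add, hrhs, mul_comm (t ^ i) (t ^ k)]
    apply div_le_div_of_nonneg_left (by positivity) (by positivity) hfact
  have hgeo : ∑' i : ℕ, t ^ (i + k) / (((i + k).factorial : ℕ) : ℝ)
      ≤ (t ^ k / (k.factorial : ℝ)) * (1 - 1/β)⁻¹ := by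
    have hr0 : (0:ℝ) ≤ 1/β := by positivity
    have hr1 : (1:ℝ)/β < 1 := (div_lt_one hβ0).mpr hβ1
    calc ∑' i : ℕ, t ^ (i + k) / (((i + k).factorial : ℕ) : ℝ)
        ≤ ∑' i : ℕ, (t ^ k / (k.factorial : ℝ)) * (1/β) ^ i :=
          Summable.tsum_le_tsum hterm ((summable_nat_add_iff k).2 hsum)
            ((summable_geometric_of_lt_one hr0 hr1).mul_left _)
      _ = (t ^ k / (k.factorial : ℝ)) * ∑' i : ℕ, (1/β) ^ i := tsum_mul_left
      _ = (t ^ k / (k.factorial : ℝ)) * (1 - 1/β)⁻¹ := by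
          rw [tsum_geometric_of_lt_one hr0 hr1]
  -- step 4: Stirling lower bound on k!
  have hstirk : a * (Real.sqrt (2 * (k:ℝ)) * ((k:ℝ) / Real.exp 1) ^ k) ≤ (k.factorial : ℝ) := by
    obtain ⟨k', rfl⟩ : ∃ k', k = k' + 1 := ⟨k - 1, by omega⟩
    have h := hstir k'
    unfold Stirling.stirlingSeq at h
    have hden : (0:ℝ) < Real.sqrt (2 * ((k' + 1 : ℕ):ℝ)) * (((k' + 1 : ℕ):ℝ) / Real.exp 1) ^ (k' + 1) := by
      have : (0:ℝ) < ((k' + 1 : ℕ):ℝ) := by positivity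
      positivity
    rw [le_div_iff₀ hden] at h
    exact le_of_eq_of_le (by norm_num) h
  -- step 5: assembly
  have hQ : (0:ℝ) < (1 - 1/β)⁻¹ := inv_pos.mpr h1β
  have hb1 : gpois k t ≤ Real.exp (-t) * ((t ^ k / (k.factorial : ℝ)) * (1 - 1/β)⁻¹) := by
    rw [hgp, htail]
    exact mul_le_mul_of_nonneg_left hgeo (Real.exp_nonneg (-t))
  have hb2 : t ^ k / (k.factorial : ℝ)
      ≤ t ^ k / (a * (Real.sqrt (2 * (k:ℝ)) * ((k:ℝ) / Real.exp 1) ^ k)) := by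
    have hd : (0:ℝ) < a * (Real.sqrt (2 * (k:ℝ)) * ((k:ℝ) / Real.exp 1) ^ k) := by positivity
    exact div_le_div_of_nonneg_left (by positivity) hd hstirk
  have hpow : t ^ k / (((k:ℝ) / Real.exp 1) ^ k) = (Real.exp 1 / β) ^ k := by
    rw [← div_pow]
    congr 1
    rw [ht]
    field_simp
  have hEβ : Real.exp (-t) * (Real.exp 1 / β) ^ k
      = Real.exp (-(k:ℝ) * (1/β + Real.log β - 1)) := by
    have h1 : Real.exp 1 / β = Real.exp (1 - Real.log β) := by
      rw [Real.exp_sub, Real.exp_log hβ0]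
    rw [h1, ← Real.exp_nat_mul, ← Real.exp_add]
    congr 1
    rw [ht]
    field_simp
    ring
  have hsq : Real.sqrt (2 * (k:ℝ)) = Real.sqrt 2 * Real.sqrt (k:ℝ) :=
    Real.sqrt_mul (by norm_num) _
  have key : Real.exp (-t) *
        ((t ^ k / (a * (Real.sqrt (2 * (k:ℝ)) * ((k:ℝ) / Real.exp 1) ^ k))) * (1 - 1/β)⁻¹)
      = (1 - 1/β)⁻¹ / (a * Real.sqrt 2) / Real.sqrt (k:ℝ)
          * Real.exp (-(k:ℝ) * (1/β + Real.log β - 1)) := by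
    rw [hsq, ← hEβ, ← hpow]
    have hP : (0:ℝ) < ((k:ℝ) / Real.exp 1) ^ k := by positivity
    have hsk : (0:ℝ) < Real.sqrt (k:ℝ) := Real.sqrt_pos.mpr hk0
    have hs2 : (0:ℝ) < Real.sqrt 2 := by positivity
    have alg : ∀ X T P sk s2 Q aa : ℝ, P ≠ 0 → sk ≠ 0 → s2 ≠ 0 → aa ≠ 0 →
        X * ((T / (aa * (s2 * sk * P))) * Q) = Q / (aa * s2) / sk * (X * (T / P)) := by
      intro X T P sk s2 Q aa hP hsk hs2 haa
      field_simp
    exact alg _ _ _ _ _ _ _ (ne_of_gt hP) (ne_of_gt hsk) (ne_of_gt hs2) (ne_of_gt ha)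
  calc gpois k t ≤ Real.exp (-t) * ((t ^ k / (k.factorial : ℝ)) * (1 - 1/β)⁻¹) := hb1
    _ ≤ Real.exp (-t) *
        ((t ^ k / (a * (Real.sqrt (2 * (k:ℝ)) * ((k:ℝ) / Real.exp 1) ^ k))) * (1 - 1/β)⁻¹) :=
      mul_le_mul_of_nonneg_left (mul_le_mul_of_nonneg_right hb2 (le_of_lt hQ))
        (Real.exp_nonneg _)
    _ = _ := key

noncomputable def unif : Measure ℝ := volume.restrict (Set.Icc (0:ℝ) 1)

instance : IsProbabilityMeasure unif :=
  ⟨by rw [unif, Measure.restrict_apply_univ, Real.volume_Icc]; norm_num⟩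

noncomputable def μpi (n : ℕ) : Measure (Fin n → ℝ) := Measure.pi fun _ => unif

instance (n : ℕ) : IsProbabilityMeasure (μpi n) := by
  unfold μpi; infer_instance

def extFun (n : ℕ) (ω : Fin n → ℝ) : ℕ → ℝ := fun i => if h : i < n then ω ⟨i, h⟩ else 0

lemma parentIter_zero (ω : ℕ → ℝ) (k : ℕ) : parentIter ω k 0 = 0 := by
  induction k with
  | zero => rfl
  | succ k ih => simpa [parentIter] using ih

lemma parentIter_congr {M : ℕ} {ω ω' : ℕ → ℝ} (hle : ∀ i, i ≤ M → ω i ≤ 1)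
    (heq : ∀ i, i ≤ M → ω i = ω' i) :
    ∀ k j, j ≤ M → parentIter ω k j = parentIter ω' k j := by
  intro k
  induction k with
  | zero => intro j _; rfl
  | succ k ih =>
    intro j hj
    show parentIter ω k ⌊(j:ℝ) * ω j⌋₊ = parentIter ω' k ⌊(j:ℝ) * ω' j⌋₊
    rw [← heq j hj]
    apply ih
    have hmul : (j:ℝ) * ω j ≤ (j:ℝ) :=
      mul_le_of_le_one_right (Nat.cast_nonneg j) (hle j hj)
    calc ⌊(j:ℝ) * ω j⌋₊ ≤ ⌊(j:ℝ)⌋₊ := Nat.floor_mono hmul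
      _ = j := Nat.floor_natCast j
      _ ≤ M := hj

lemma measurable_comp_nat {α β : Type*} [MeasurableSpace α] [MeasurableSpace β]
    [MeasurableSingletonClass β] [Countable β]
    {F : α → ℕ → β} {g : α → ℕ} (hF : ∀ j, Measurable fun ω => F ω j) (hg : Measurable g) :
    Measurable fun ω => F ω (g ω) := by
  apply measurable_to_countable'
  intro r
  have hset : (fun ω => F ω (g ω)) ⁻¹' {r} = ⋃ j : ℕ, ({ω | g ω = j} ∩ {ω | F ω j = r}) := by
    ext ω
    simp only [Set.mem_preimage, Set.mem_singleton_iff, Set.mem_iUnion, Set.mem_inter_iff,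
      Set.mem_setOf_eq]
    constructor
    · intro h; exact ⟨g ω, rfl, h⟩
    · rintro ⟨j, hj, h⟩; rw [← hj] at h; exact h
  rw [hset]
  exact MeasurableSet.iUnion fun j =>
    (hg (measurableSet_singleton j)).inter ((hF j) (measurableSet_singleton r))

lemma measurable_extFun (n : ℕ) (j : ℕ) : Measurable fun ω : Fin n → ℝ => extFun n ω j := by
  unfold extFun
  by_cases h : j < n
  · simp only [dif_pos h]; exact measurable_pi_apply _
  · simp only [dif_neg h]; exact measurable_const

lemma measurable_parentIter (n k j : ℕ) :
    Measurable fun ω : Fin n → ℝ => parentIter (extFun n ω) k j := by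
  induction k generalizing j with
  | zero => exact measurable_const
  | succ k ih =>
    have hg : Measurable fun ω : Fin n → ℝ => ⌊(j:ℝ) * extFun n ω j⌋₊ :=
      Nat.measurable_floor.comp ((measurable_extFun n j).const_mul _)
    exact measurable_comp_nat (F := fun ω j' => parentIter (extFun n ω) k j')
      (fun j' => ih j') hg

def Ev (c : ℝ) (k m : ℕ) : Set (Fin (m+1) → ℝ) :=
  {ω | c ≤ (parentIter (extFun (m+1) ω) k m : ℝ)}

lemma Ev_measurable (c : ℝ) (k m : ℕ) : MeasurableSet (Ev c k m) := by
  have h : Measurable fun ω : Fin (m+1) → ℝ => ((parentIter (extFun (m+1) ω) k m : ℕ) : ℝ) :=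
    measurable_from_nat.comp (measurable_parentIter (m+1) k m)
  exact h measurableSet_Ici

lemma good_ae (n : ℕ) : μpi n {ω | ¬ ∀ i, ω i ∈ Set.Icc (0:ℝ) 1} = 0 := by
  have hs : {ω : Fin n → ℝ | ¬ ∀ i, ω i ∈ Set.Icc (0:ℝ) 1}
      = ⋃ i : Fin n, (fun ω : Fin n → ℝ => ω i) ⁻¹' (Set.Icc (0:ℝ) 1)ᶜ := by
    ext ω
    simp [not_forall]
  rw [hs]
  apply measure_iUnion_null
  intro i
  apply Measure.pi_eval_preimage_null
  rw [unif, Measure.restrict_apply (measurableSet_Icc.compl), Set.compl_inter_self]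
  exact measure_empty

lemma measurePreserving_proj {m n : ℕ} (h : m ≤ n) :
    MeasurePreserving (fun (ω : Fin n → ℝ) (i : Fin m) => ω (Fin.castLE h i))
      (μpi n) (μpi m) := by
  constructor
  · exact measurable_pi_lambda _ fun i => measurable_pi_apply _
  · refine (Measure.pi_eq fun s hs => ?_).symm
    have hmeas : Measurable (fun (ω : Fin n → ℝ) (i : Fin m) => ω (Fin.castLE h i)) :=
      measurable_pi_lambda _ fun i => measurable_pi_apply _
    rw [Measure.map_apply hmeas (MeasurableSet.univ_pi hs)]
    have hpre : (fun (ω : Fin n → ℝ) (i : Fin m) => ω (Fin.castLE h i)) ⁻¹'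
        (Set.pi Set.univ s)
        = Set.pi Set.univ (fun j : Fin n =>
            if h' : (j : ℕ) < m then s ⟨j, h'⟩ else Set.univ) := by
      ext ω
      simp only [Set.mem_preimage, Set.mem_pi, Set.mem_univ, forall_true_left, true_implies]
      constructor
      · intro hω j
        by_cases h' : (j : ℕ) < m
        · rw [dif_pos h']
          have := hω ⟨(j : ℕ), h'⟩
          have hj : Fin.castLE h ⟨(j : ℕ), h'⟩ = j := by
            apply Fin.ext; rfl
          rwa [hj] at this
        · rw [dif_neg h']; trivial
      · intro hω i
        have := hω (Fin.castLE h i)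
        have h' : ((Fin.castLE h i : Fin n) : ℕ) < m := i.isLt
        rw [dif_pos h'] at this
        have hi : (⟨((Fin.castLE h i : Fin n) : ℕ), h'⟩ : Fin m) = i := by
          apply Fin.ext; rfl
        rwa [hi] at this
    rw [hpre, μpi, Measure.pi_pi]
    set F : ℕ → ENNReal := fun j => if h' : j < m then unif (s ⟨j, h'⟩) else 1 with hF
    have hFj : ∀ j : Fin n, unif (if h' : (j : ℕ) < m then s ⟨j, h'⟩ else Set.univ)
        = F (j : ℕ) := by
      intro j
      by_cases h' : (j : ℕ) < m
      · rw [dif_pos h', hF]; simp only [dif_pos h']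
      · rw [dif_neg h', hF]; simp only [dif_neg h']; exact measure_univ
    calc ∏ j : Fin n, unif (if h' : (j : ℕ) < m then s ⟨j, h'⟩ else Set.univ)
        = ∏ j : Fin n, F (j : ℕ) := Finset.prod_congr rfl fun j _ => hFj j
      _ = ∏ j ∈ Finset.range n, F j := Fin.prod_univ_eq_prod_range F n
      _ = ∏ j ∈ Finset.range m, F j := by
          refine (Finset.prod_subset (Finset.range_subset_range.2 h) fun x _ hx => ?_).symm
          rw [Finset.mem_range, not_lt] at hx
          rw [hF]
          simp only [dif_neg (not_lt.mpr hx)]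
      _ = ∏ i : Fin m, F (i : ℕ) := (Fin.prod_univ_eq_prod_range F m).symm
      _ = ∏ i : Fin m, unif (s i) := by
          apply Finset.prod_congr rfl
          intro i _
          rw [hF]
          simp only [dif_pos i.isLt]

lemma main_rec {c : ℝ} (hc : 0 < c) :
    ∀ k m : ℕ, μpi (m+1) (Ev c k m)
      ≤ ENNReal.ofReal (if m = 0 then 0 else gpois k (Real.log ((m : ℝ) / c))) := by
  intro k
  induction k with
  | zero =>
    intro m
    by_cases hcm : c ≤ (m : ℝ)
    · have hm : m ≠ 0 := by
        rintro rfl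
        simp only [Nat.cast_zero] at hcm
        linarith
      have hEv : Ev c 0 m = Set.univ := by
        ext ω
        simp only [Ev, Set.mem_setOf_eq, Set.mem_univ, iff_true]
        exact hcm
      have hL : 0 ≤ Real.log ((m:ℝ)/c) := Real.log_nonneg ((one_le_div hc).mpr hcm)
      have hg : gpois 0 (Real.log ((m:ℝ)/c)) = 1 := by
        unfold gpois
        rw [if_pos hL]
        simp
      rw [hEv, if_neg hm, hg, measure_univ, ENNReal.ofReal_one]
    · have hEv : Ev c 0 m = ∅ := by
        ext ω
        simp only [Ev, Set.mem_setOf_eq, Set.mem_empty_iff_false, iff_false]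
        exact fun h => hcm (by exact_mod_cast h)
      rw [hEv, measure_empty]
      exact bot_le
  | succ k ih =>
    intro m
    rcases Nat.eq_zero_or_pos m with hm | hm
    · subst hm
      have hEv : Ev c (k+1) 0 = ∅ := by
        ext ω
        simp only [Ev, Set.mem_setOf_eq, Set.mem_empty_iff_false, iff_false]
        rw [parentIter_zero]
        intro h
        simp only [Nat.cast_zero] at h
        linarith
      rw [hEv, measure_empty]
      exact bot_le
    · have hm0 : m ≠ 0 := Nat.pos_iff_ne_zero.mp hm
      have hmR : (0:ℝ) < m := by exact_mod_cast hm
      set L := Real.log ((m:ℝ)/c) with hL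
      set e := MeasurableEquiv.piFinSuccAbove (fun _ : Fin (m+1) => ℝ) (Fin.last m) with he
      have hmp : MeasurePreserving e (μpi (m+1)) (unif.prod (μpi m)) :=
        measurePreserving_piFinSuccAbove (fun _ => unif) (Fin.last m)
      have hA : MeasurableSet (e.symm ⁻¹' (Ev c (k+1) m)) :=
        e.symm.measurable (Ev_measurable c (k+1) m)
      have h1 : μpi (m+1) (Ev c (k+1) m) = (unif.prod (μpi m)) (e.symm ⁻¹' Ev c (k+1) m) :=
        ((hmp.symm e).measure_preimage (Ev_measurable c (k+1) m).nullMeasurableSet).symm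
      have hslice : ∀ x ∈ Set.Ico (0:ℝ) 1,
          μpi m (Prod.mk x ⁻¹' (e.symm ⁻¹' Ev c (k+1) m))
            ≤ ENNReal.ofReal (gpois k (Real.log ((m:ℝ) * x / c))) := by
        intro x hx
        obtain ⟨hx0, hx1⟩ := hx
        set p := ⌊(m:ℝ) * x⌋₊ with hp
        have hpm : p < m := by
          rw [hp, Nat.floor_lt (by positivity)]
          calc (m:ℝ) * x < (m:ℝ) * 1 := by
                exact mul_lt_mul_of_pos_left hx1 hmR
            _ = (m:ℝ) := mul_one _
        have hp1 : p + 1 ≤ m := hpm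
        set Good : Set (Fin m → ℝ) := {y | ∀ i, y i ∈ Set.Icc (0:ℝ) 1} with hGood
        have hsub : (Prod.mk x ⁻¹' (e.symm ⁻¹' Ev c (k+1) m)) ∩ Good
            ⊆ (fun (y : Fin m → ℝ) (i : Fin (p+1)) => y (Fin.castLE hp1 i)) ⁻¹' Ev c k p := by
          rintro y ⟨hy, hyG⟩
          have hy' : c ≤ (parentIter (extFun (m+1) ((Fin.last m).insertNth x y)) (k+1) m : ℝ) := by
            have : e.symm (x, y) = (Fin.last m).insertNth x y := by
              simp [he, MeasurableEquiv.piFinSuccAbove, Fin.insertNth_last', Fin.snocEquiv]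
            simpa [Ev, this] using hy
          set W := extFun (m+1) ((Fin.last m).insertNth x y) with hW
          have hWm : W m = x := by
            rw [hW, extFun]
            simp only [dif_pos (Nat.lt_succ_self m)]
            have hlast : (⟨m, Nat.lt_succ_self m⟩ : Fin (m+1)) = Fin.last m := rfl
            rw [hlast, Fin.insertNth_apply_same]
          have hWi : ∀ i (hi : i < m), W i = y ⟨i, hi⟩ := by
            intro i hi
            rw [hW, extFun]
            simp only [dif_pos (Nat.lt_succ_of_lt hi)]
            have hcast : (⟨i, Nat.lt_succ_of_lt hi⟩ : Fin (m+1))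
                = (Fin.last m).succAbove ⟨i, hi⟩ := by
              rw [Fin.succAbove_last]
              rfl
            rw [hcast, Fin.insertNth_apply_succAbove]
          have hstep : parentIter W (k+1) m = parentIter W k p := by
            show parentIter W k ⌊(m:ℝ) * W m⌋₊ = parentIter W k p
            rw [hWm, ← hp]
          have hcongr : parentIter W k p = parentIter (extFun (p+1)
              (fun i : Fin (p+1) => y (Fin.castLE hp1 i))) k p := by
            apply parentIter_congr (M := p) ?_ ?_ k p le_rfl
            · intro i hi
              have him : i < m := lt_of_le_of_lt hi hpm
              rw [hWi i him]
              exact (hyG ⟨i, him⟩).2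
            · intro i hi
              have him : i < m := lt_of_le_of_lt hi hpm
              rw [hWi i him, extFun]
              simp only [dif_pos (Nat.lt_succ_of_le hi)]
              rfl
          show c ≤ (parentIter (extFun (p+1) (fun i : Fin (p+1) => y (Fin.castLE hp1 i))) k p : ℝ)
          rw [← hcongr, ← hstep]
          exact hy'
        calc μpi m (Prod.mk x ⁻¹' (e.symm ⁻¹' Ev c (k+1) m))
            ≤ μpi m (((Prod.mk x ⁻¹' (e.symm ⁻¹' Ev c (k+1) m)) ∩ Good)
                ∪ {y : Fin m → ℝ | ¬ ∀ i, y i ∈ Set.Icc (0:ℝ) 1}) := by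
              apply measure_mono
              intro y hy
              by_cases h : ∀ i, y i ∈ Set.Icc (0:ℝ) 1
              · exact Or.inl ⟨hy, h⟩
              · exact Or.inr h
          _ ≤ μpi m ((Prod.mk x ⁻¹' (e.symm ⁻¹' Ev c (k+1) m)) ∩ Good)
                + μpi m {y : Fin m → ℝ | ¬ ∀ i, y i ∈ Set.Icc (0:ℝ) 1} := measure_union_le _ _
          _ = μpi m ((Prod.mk x ⁻¹' (e.symm ⁻¹' Ev c (k+1) m)) ∩ Good) := by
              rw [good_ae m, add_zero]
          _ ≤ μpi m ((fun (y : Fin m → ℝ) (i : Fin (p+1)) => y (Fin.castLE hp1 i)) ⁻¹' Ev c k p) :=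
              measure_mono hsub
          _ = μpi (p+1) (Ev c k p) :=
              (measurePreserving_proj hp1).measure_preimage
                (Ev_measurable c k p).nullMeasurableSet
          _ ≤ ENNReal.ofReal (if p = 0 then 0 else gpois k (Real.log ((p:ℝ)/c))) := ih p
          _ ≤ ENNReal.ofReal (gpois k (Real.log ((m:ℝ) * x / c))) := by
              apply ENNReal.ofReal_le_ofReal
              by_cases hp0 : p = 0
              · rw [if_pos hp0]
                exact gpois_nonneg _ _
              · rw [if_neg hp0]
                apply gpois_mono k
                have hple : (p:ℝ) ≤ (m:ℝ) * x := Nat.floor_le (by positivity)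
                have hppos : (0:ℝ) < (p:ℝ) := by
                  have : 1 ≤ p := Nat.pos_iff_ne_zero.mpr hp0
                  exact_mod_cast this
                apply Real.log_le_log (by positivity)
                gcongr
      haveI : IsFiniteMeasure (volume.restrict (Set.Ico (0:ℝ) 1)) :=
        ⟨by rw [Measure.restrict_apply_univ, Real.volume_Ico]; exact ENNReal.ofReal_lt_top⟩
      have hmg : Measurable fun x : ℝ => gpois k (Real.log ((m:ℝ) * x / c)) :=
        (gpois_measurable k).comp
          (Real.measurable_log.comp ((measurable_id.const_mul _).div_const c))
      have hInt : Integrable (fun x : ℝ => gpois k (Real.log ((m:ℝ) * x / c)))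
          (volume.restrict (Set.Ico (0:ℝ) 1)) := by
        refine ⟨hmg.aestronglyMeasurable, ?_⟩
        apply HasFiniteIntegral.of_bounded (C := 1)
        apply ae_of_all
        intro x
        rw [Real.norm_eq_abs, abs_of_nonneg (gpois_nonneg _ _)]
        exact gpois_le_one _ _
      have hunif : unif = volume.restrict (Set.Ico (0:ℝ) 1) :=
        (MeasureTheory.restrict_Ico_eq_restrict_Icc).symm
      calc μpi (m+1) (Ev c (k+1) m)
          = ∫⁻ x, μpi m (Prod.mk x ⁻¹' (e.symm ⁻¹' Ev c (k+1) m)) ∂unif := by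
            rw [h1, Measure.prod_apply hA]
        _ ≤ ∫⁻ x in Set.Ico (0:ℝ) 1,
              ENNReal.ofReal (gpois k (Real.log ((m:ℝ) * x / c))) ∂volume := by
            rw [hunif]
            exact setLIntegral_mono (ENNReal.measurable_ofReal.comp hmg) hslice
        _ = ENNReal.ofReal (∫ x in Set.Ico (0:ℝ) 1, gpois k (Real.log ((m:ℝ) * x / c))) :=
            (ofReal_integral_eq_lintegral_ofReal hInt
              (ae_of_all _ fun x => gpois_nonneg _ _)).symm
        _ = ENNReal.ofReal (gpois (k+1) L) := by
            congr 1
            rw [← gpois_integral k L, intervalIntegral.integral_of_le zero_le_one]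
            rw [MeasureTheory.integral_Ico_eq_integral_Ioo,
              ← MeasureTheory.integral_Ioc_eq_integral_Ioo]
            apply MeasureTheory.setIntegral_congr_fun measurableSet_Ioc
            intro x hx
            have hx0 : 0 < x := hx.1
            have harg : (m:ℝ) * x / c = ((m:ℝ)/c) * x := by ring
            show gpois k (Real.log ((m:ℝ) * x / c)) = gpois k (L + Real.log x)
            rw [harg, Real.log_mul (by positivity) (ne_of_gt hx0), hL]
        _ = ENNReal.ofReal (if m = 0 then 0 else gpois (k+1) L) := by
            rw [if_neg hm0]

end Aux

/-- Fix `β > e`. There is `C > 0` (depending only on `β`) such that for all `k ≥ 1`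
and `n ≥ 1`, `P(π^{(k)}(n) ≥ n e^{-k/β}) ≤ (C/√k) exp(-k(1/β + ln β - 1))`,
where the parent maps are built from i.i.d. uniforms `U_0,…,U_n` on `[0,1]`. -/
theorem iterated_parent_upper_tail (β : ℝ) (hβ : Real.exp 1 < β) :
    ∃ C : ℝ, 0 < C ∧ ∀ k : ℕ, 1 ≤ k → ∀ n : ℕ, 1 ≤ n →
      (Measure.pi fun _ : Fin (n + 1) => volume.restrict (Set.Icc (0 : ℝ) 1))
          {ω : Fin (n + 1) → ℝ |
            (n : ℝ) * Real.exp (-(k : ℝ) / β) ≤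
              (parentIter (fun i => if h : i < n + 1 then ω ⟨i, h⟩ else 0) k n : ℝ)} ≤
        ENNReal.ofReal
          (C / Real.sqrt k * Real.exp (-(k : ℝ) * (1 / β + Real.log β - 1))) := by
  obtain ⟨C, hC, hbound⟩ := gpois_tail_bound hβ
  refine ⟨C, hC, ?_⟩
  intro k hk n hn
  have hnR : (0:ℝ) < n := by exact_mod_cast hn
  set c : ℝ := (n:ℝ) * Real.exp (-(k:ℝ)/β) with hc
  have hc0 : 0 < c := by positivity
  have hset : (Measure.pi fun _ : Fin (n + 1) => volume.restrict (Set.Icc (0 : ℝ) 1))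
      {ω : Fin (n + 1) → ℝ |
        (n : ℝ) * Real.exp (-(k : ℝ) / β) ≤
          (parentIter (fun i => if h : i < n + 1 then ω ⟨i, h⟩ else 0) k n : ℝ)}
      = μpi (n+1) (Ev c k n) := rfl
  rw [hset]
  have hlog : Real.log ((n:ℝ)/c) = (k:ℝ)/β := by
    have h1 : (n:ℝ)/c = (Real.exp (-(k:ℝ)/β))⁻¹ := by
      rw [hc]
      field_simp
    rw [h1, Real.log_inv, Real.log_exp]
    ring
  calc μpi (n+1) (Ev c k n)
      ≤ ENNReal.ofReal (if n = 0 then 0 else gpois k (Real.log ((n:ℝ)/c))) := main_rec hc0 k n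
    _ = ENNReal.ofReal (gpois k ((k:ℝ)/β)) := by
        rw [if_neg (by omega), hlog]
    _ ≤ ENNReal.ofReal (C / Real.sqrt k * Real.exp (-(k:ℝ) * (1/β + Real.log β - 1))) :=
        ENNReal.ofReal_le_ofReal (hbound k hk)
end

section
/- Let A_k(n) denote the number of increasing trees on n labeled vertices with height at most k. For every integer k ≥ 3 there is a constant C_k such that for all sufficiently large n, A_k(n) ≥ exp(n ln n - n ln^{(k)}(n) - C_k n), where ln^{(k)} is the k-fold iterated logarithm. -/
open Finset Filter Real

/-- Depth of vertex `i` in the tree encoded by the parent map `p`. -/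
def treeDepth (p : ℕ → ℕ) (i : ℕ) : ℕ :=
  if h : p i < i then treeDepth p (p i) + 1 else 0
termination_by i
decreasing_by exact h

/-- `p` encodes a recursive tree on vertices `0, …, n-1`: every nonroot vertex has a
parent with smaller index (and `p` is trivial outside). Each such map is equally
likely, giving the random recursive tree on `n` vertices. -/
def IsParentMap (n : ℕ) (p : ℕ → ℕ) : Prop :=
  (∀ i, 0 < i → i < n → p i < i) ∧ (∀ i, i = 0 ∨ n ≤ i → p i = 0)

/-- Height of the recursive tree on `n` vertices encoded by `p`. -/
def rrtHeight (n : ℕ) (p : ℕ → ℕ) : ℕ := (Finset.range n).sup (treeDepth p)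

/-- Probability of an event under the uniform distribution on recursive trees
with `n` vertices (there are `(n-1)!` of them). -/
noncomputable def rrtProb (n : ℕ) (P : (ℕ → ℕ) → Prop) : ℝ :=
  (Nat.card {p : ℕ → ℕ // IsParentMap n p ∧ P p} : ℝ) / (n - 1).factorial

/-- `A_k(n)`: the number of increasing trees on `n` vertices with height at most `k`
(encoded by parent maps on `{0,…,n-1}` with decreasing parents). -/
noncomputable def Akn (k n : ℕ) : ℕ :=
  Nat.card {p : ℕ → ℕ // IsParentMap n p ∧ rrtHeight n p ≤ k}

lemma treeDepth_of_lt {p : ℕ → ℕ} {i : ℕ} (h : p i < i) :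
    treeDepth p i = treeDepth p (p i) + 1 := by rw [treeDepth, dif_pos h]

lemma treeDepth_of_ge {p : ℕ → ℕ} {i : ℕ} (h : ¬ p i < i) : treeDepth p i = 0 := by
  rw [treeDepth, dif_neg h]

lemma treeDepth_congr (p q : ℕ → ℕ) : ∀ i, (∀ j, j ≤ i → p j = q j) → treeDepth p i = treeDepth q i := by
  intro i
  induction i using Nat.strong_induction_on with
  | _ i ih =>
    intro h
    by_cases hlt : p i < i
    · have hq : q i < i := h i le_rfl ▸ hlt
      rw [treeDepth_of_lt hlt, treeDepth_of_lt hq, h i le_rfl]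
      have := ih (q i) hq (fun j hj => h j (hj.trans hq.le))
      omega
    · have hq : ¬ q i < i := h i le_rfl ▸ hlt
      rw [treeDepth_of_ge hlt, treeDepth_of_ge hq]

lemma finite_S (n : ℕ) (hn : 1 ≤ n) (Q : (ℕ → ℕ) → Prop) :
    Finite {p : ℕ → ℕ // IsParentMap n p ∧ Q p} := by
  have key : ∀ (p : {p : ℕ → ℕ // IsParentMap n p ∧ Q p}) (i : Fin n), p.1 i < n := by
    rintro ⟨p, ⟨h1, h2⟩, _⟩ ⟨i, hi⟩
    rcases Nat.eq_zero_or_pos i with h | h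
    · simp only [h2 i (Or.inl h)]; omega
    · exact (h1 i h hi).trans hi
  apply Finite.of_injective (fun p => fun i : Fin n => (⟨p.1 i, key p i⟩ : Fin n))
  intro p q hpq
  apply Subtype.ext; funext i
  by_cases hi : i < n
  · exact congrArg Fin.val (congrFun hpq ⟨i, hi⟩)
  · rw [p.2.1.2 i (Or.inr (le_of_not_gt hi)), q.2.1.2 i (Or.inr (le_of_not_gt hi))]

def FSet (m n : ℕ) := {f : ℕ → ℕ // ∀ i, (m ≤ i → i < n → f i < m) ∧ ((i < m ∨ n ≤ i) → f i = 0)}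

lemma card_FSet (m n : ℕ) : Nat.card (FSet m n) = m ^ (n - m) := by
  have e : FSet m n ≃ (↥(Finset.Ico m n) → Fin m) :=
    { toFun := fun f j =>
        ⟨f.1 j.1, (f.2 j.1).1 (Finset.mem_Ico.mp j.2).1 (Finset.mem_Ico.mp j.2).2⟩
      invFun := fun g =>
        ⟨fun i => if h : i ∈ Finset.Ico m n then (g ⟨i, h⟩ : ℕ) else 0, by
          intro i
          dsimp only
          constructor
          · intro h1 h2
            rw [dif_pos (Finset.mem_Ico.mpr ⟨h1, h2⟩)]
            exact (g _).2
          · intro h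
            rw [dif_neg (by simp only [Finset.mem_Ico]; omega)]⟩
      left_inv := by
        intro f
        apply Subtype.ext; funext i
        dsimp only
        by_cases h : i ∈ Finset.Ico m n
        · simp [h]
        · rw [dif_neg h]
          exact ((f.2 i).2 (by simp only [Finset.mem_Ico] at h; omega)).symm
      right_inv := by
        intro g
        funext j
        apply Fin.ext
        simp [j.2] }
  rw [Nat.card_congr e, Nat.card_eq_fintype_card, Fintype.card_fun]
  simp

lemma Akn_step (k m n : ℕ) (hm : 1 ≤ m) (hmn : m ≤ n) :
    Akn k m * m ^ (n - m) ≤ Akn (k + 1) n := by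
  have hn : 1 ≤ n := hm.trans hmn
  haveI := finite_S n hn (fun p => rrtHeight n p ≤ k + 1)
  have prop : ∀ x : {q : ℕ → ℕ // IsParentMap m q ∧ rrtHeight m q ≤ k} × FSet m n,
      IsParentMap n (fun i => if i < m then x.1.1 i else x.2.1 i) ∧
      rrtHeight n (fun i => if i < m then x.1.1 i else x.2.1 i) ≤ k + 1 := by
    rintro ⟨⟨q, ⟨hq1, hq2⟩, hqh⟩, ⟨f, hf⟩⟩
    dsimp only
    set p : ℕ → ℕ := fun i => if i < m then q i else f i with hp
    have hdep : ∀ i, i < m → treeDepth p i = treeDepth q i := by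
      intro i hi
      apply treeDepth_congr
      intro j hj
      simp [hp, hj.trans_lt hi]
    refine ⟨⟨?_, ?_⟩, ?_⟩
    · intro i hi0 hin
      by_cases h : i < m
      · simpa [hp, h] using hq1 i hi0 h
      · have := (hf i).1 (le_of_not_gt h) hin
        simp only [hp, if_neg h]
        omega
    · intro i hi
      rcases hi with rfl | hi
      · have h0 : (0:ℕ) < m := hm
        simp [hp, h0, hq2 0 (Or.inl rfl)]
      · have h2 : ¬ i < m := by omega
        simp [hp, h2, (hf i).2 (Or.inr hi)]
    · apply Finset.sup_le
      intro i hi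
      rw [Finset.mem_range] at hi
      by_cases h : i < m
      · rw [hdep i h]
        have := le_trans (Finset.le_sup (f := treeDepth q) (Finset.mem_range.mpr h)) hqh
        omega
      · have hfi : f i < m := (hf i).1 (le_of_not_gt h) hi
        have hpi : p i = f i := by simp [hp, h]
        have hlt : p i < i := by rw [hpi]; exact hfi.trans_le (le_of_not_gt h)
        rw [treeDepth_of_lt hlt, hpi, hdep (f i) hfi]
        have := le_trans (Finset.le_sup (f := treeDepth q) (Finset.mem_range.mpr hfi)) hqh
        omega
  have ginj : Function.Injective
      (fun x : {q : ℕ → ℕ // IsParentMap m q ∧ rrtHeight m q ≤ k} × FSet m n =>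
        (⟨fun i => if i < m then x.1.1 i else x.2.1 i, prop x⟩ :
          {p : ℕ → ℕ // IsParentMap n p ∧ rrtHeight n p ≤ k + 1})) := by
    rintro ⟨q, f⟩ ⟨q', f'⟩ hEq
    have hfun : ∀ i, (if i < m then q.1 i else f.1 i) = (if i < m then q'.1 i else f'.1 i) :=
      fun i => congrFun (congrArg Subtype.val hEq) i
    refine Prod.ext (Subtype.ext (funext fun i => ?_)) (Subtype.ext (funext fun i => ?_))
    · by_cases h : i < m
      · have := hfun i; simpa [h] using this
      · rw [q.2.1.2 i (Or.inr (le_of_not_gt h)), q'.2.1.2 i (Or.inr (le_of_not_gt h))]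
    · by_cases h : i < m
      · rw [(f.2 i).2 (Or.inl h), (f'.2 i).2 (Or.inl h)]
      · have := hfun i; simpa [h] using this
  calc Akn k m * m ^ (n - m)
      = Nat.card {q : ℕ → ℕ // IsParentMap m q ∧ rrtHeight m q ≤ k} * Nat.card (FSet m n) := by
        rw [Akn, card_FSet]
    _ = Nat.card ({q : ℕ → ℕ // IsParentMap m q ∧ rrtHeight m q ≤ k} × FSet m n) :=
        (Nat.card_prod _ _).symm
    _ ≤ Akn (k + 1) n := Nat.card_le_card_of_injective _ ginj

lemma Akn_one (n : ℕ) (hn : 1 ≤ n) : 1 ≤ Akn 1 n := by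
  haveI := finite_S n hn (fun p => rrtHeight n p ≤ 1)
  have hne : Nonempty {p : ℕ → ℕ // IsParentMap n p ∧ rrtHeight n p ≤ 1} := by
    refine ⟨⟨fun _ => 0, ⟨fun i hi _ => hi, fun i _ => rfl⟩, ?_⟩⟩
    apply Finset.sup_le
    intro i _
    rcases Nat.eq_zero_or_pos i with rfl | hi
    · rw [treeDepth_of_ge (by omega)]; omega
    · rw [treeDepth_of_lt hi, treeDepth_of_ge (by omega)]
  exact Nat.card_pos

noncomputable def towE : ℕ → ℝ
  | 0 => 2
  | (k+1) => Real.exp (towE k)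

lemma towE_pos (k : ℕ) : 0 < towE k := by
  cases k with
  | zero => norm_num [towE]
  | succ k => exact Real.exp_pos _

lemma two_le_towE (k : ℕ) : 2 ≤ towE k := by
  induction k with
  | zero => norm_num [towE]
  | succ k ih =>
    have := Real.add_one_le_exp (towE k)
    show (2:ℝ) ≤ Real.exp (towE k)
    linarith

lemma towE_le_succ (k : ℕ) : towE k ≤ towE (k + 1) := by
  have := Real.add_one_le_exp (towE k)
  show towE k ≤ Real.exp (towE k)
  linarith

lemma le_logIter (k : ℕ) {x : ℝ} (hx : towE k ≤ x) : 2 ≤ Real.log^[k] x := by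
  induction k generalizing x with
  | zero => simpa [towE] using hx
  | succ k ih =>
    rw [Function.iterate_succ_apply]
    apply ih
    calc towE k = Real.log (Real.exp (towE k)) := (Real.log_exp _).symm
      _ ≤ Real.log x := Real.log_le_log (Real.exp_pos _) hx

lemma logIter_mono (k : ℕ) {x y : ℝ} (hx : towE k ≤ x) (hxy : x ≤ y) :
    Real.log^[k] x ≤ Real.log^[k] y := by
  induction k generalizing x y with
  | zero => simpa using hxy
  | succ k ih =>
    rw [Function.iterate_succ_apply, Function.iterate_succ_apply]
    have hx0 : 0 < x := lt_of_lt_of_le (towE_pos _) hx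
    have hlx : towE k ≤ Real.log x := by
      calc towE k = Real.log (Real.exp (towE k)) := (Real.log_exp _).symm
        _ ≤ Real.log x := Real.log_le_log (Real.exp_pos _) hx
    exact ih hlx (Real.log_le_log hx0 hxy)

lemma logIter_le_self (k : ℕ) {x : ℝ} (hx : towE k ≤ x) : Real.log^[k] x ≤ x := by
  induction k generalizing x with
  | zero => simp
  | succ k ih =>
    rw [Function.iterate_succ_apply]
    have hx0 : 0 < x := lt_of_lt_of_le (towE_pos _) hx
    have hlx : towE k ≤ Real.log x := by
      calc towE k = Real.log (Real.exp (towE k)) := (Real.log_exp _).symm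
        _ ≤ Real.log x := Real.log_le_log (Real.exp_pos _) hx
    calc Real.log^[k] (Real.log x) ≤ Real.log x := ih hlx
      _ ≤ x := by have := Real.log_le_sub_one_of_pos hx0; linarith

lemma logIter_le_log (k : ℕ) (hk : 1 ≤ k) {x : ℝ} (hx : towE k ≤ x) :
    Real.log^[k] x ≤ Real.log x := by
  cases k with
  | zero => omega
  | succ k =>
    rw [Function.iterate_succ_apply]
    apply logIter_le_self
    calc towE k = Real.log (Real.exp (towE k)) := (Real.log_exp _).symm
      _ ≤ Real.log x := Real.log_le_log (Real.exp_pos _) hx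

lemma tendsto_sqrt_atTop : Tendsto Real.sqrt atTop atTop := by
  apply tendsto_atTop_atTop.2
  intro b
  refine ⟨(max b 0) ^ 2, fun x hx => ?_⟩
  calc b ≤ max b 0 := le_max_left _ _
    _ = Real.sqrt ((max b 0) ^ 2) := (Real.sqrt_sq (le_max_right _ _)).symm
    _ ≤ Real.sqrt x := Real.sqrt_le_sqrt hx

lemma tendsto_div_logIter (k : ℕ) (hk : 1 ≤ k) :
    Tendsto (fun n : ℕ => (n : ℝ) / Real.log^[k] n) atTop atTop := by
  have hs : Tendsto (fun n : ℕ => Real.sqrt n / 2) atTop atTop :=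
    (_root_.tendsto_sqrt_atTop.comp tendsto_natCast_atTop_atTop).atTop_div_const (by norm_num)
  apply tendsto_atTop_mono' atTop _ hs
  have hev : ∀ᶠ n : ℕ in atTop, towE k ≤ (n : ℝ) ∧ (1:ℝ) ≤ (n:ℝ) :=
    (tendsto_natCast_atTop_atTop.eventually_ge_atTop _).and
      (tendsto_natCast_atTop_atTop.eventually_ge_atTop _)
  filter_upwards [hev] with n hn
  obtain ⟨h1, h2⟩ := hn
  set x : ℝ := (n : ℝ)
  have hx0 : (0:ℝ) < x := by linarith
  have hs0 : 0 < Real.sqrt x := Real.sqrt_pos.mpr hx0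
  have hL2 : 2 ≤ Real.log^[k] x := le_logIter k h1
  have hLlog : Real.log^[k] x ≤ Real.log x := logIter_le_log k hk h1
  have hlog : Real.log x ≤ 2 * Real.sqrt x := by
    have h3 : Real.log (Real.sqrt x) ≤ Real.sqrt x - 1 := Real.log_le_sub_one_of_pos hs0
    have h4 : Real.log (Real.sqrt x) = Real.log x / 2 := Real.log_sqrt hx0.le
    linarith
  have hLle : Real.log^[k] x ≤ 2 * Real.sqrt x := hLlog.trans hlog
  calc Real.sqrt x / 2 = x / (2 * Real.sqrt x) := by
        rw [eq_div_iff (by positivity)]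
        rw [div_mul_eq_mul_div, mul_comm, mul_assoc, Real.mul_self_sqrt hx0.le]
        ring
    _ ≤ x / Real.log^[k] x := by
        apply div_le_div_of_nonneg_left hx0.le (by linarith) hLle

theorem aux_bound : ∀ k : ℕ, 1 ≤ k → ∃ C : ℝ, 0 ≤ C ∧ ∃ N : ℕ, ∀ n : ℕ, N ≤ n →
    (Akn k n : ℝ) ≥ Real.exp ((n : ℝ) * Real.log n - (n : ℝ) * Real.log^[k] n - C * n) := by
  intro k hk
  induction k, hk using Nat.le_induction with
  | base =>
    refine ⟨0, le_refl 0, 1, fun n hn => ?_⟩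
    have h1 : (1:ℝ) ≤ (Akn 1 n : ℝ) := by exact_mod_cast Akn_one n hn
    calc Real.exp ((n:ℝ) * Real.log n - (n:ℝ) * Real.log^[1] n - 0 * n) = 1 := by
          simp
      _ ≤ (Akn 1 n : ℝ) := h1
  | succ k hk ih =>
    obtain ⟨C, hC, N, hN⟩ := ih
    set L : ℕ → ℝ := fun n => Real.log^[k] n with hLdef
    set m : ℕ → ℕ := fun n => ⌈(n : ℝ) / L n⌉₊ with hmdef
    have hme : Tendsto (fun n : ℕ => (n : ℝ) / L n) atTop atTop := tendsto_div_logIter k hk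
    have hev : ∀ᶠ n : ℕ in atTop,
        towE (k+1) ≤ (n:ℝ) ∧ (N:ℝ) ≤ (n:ℝ) / L n ∧ towE k ≤ (n:ℝ) / L n :=
      (tendsto_natCast_atTop_atTop.eventually_ge_atTop _).and
        ((hme.eventually_ge_atTop _).and (hme.eventually_ge_atTop _))
    obtain ⟨N', hN'⟩ := eventually_atTop.mp hev
    refine ⟨C + 2, by linarith, N', fun n hn => ?_⟩
    obtain ⟨hn1, hn2, hn3⟩ := hN' n hn
    set x : ℝ := (n : ℝ) with hx
    set M : ℕ := m n with hM
    have hx0 : 0 < x := lt_of_lt_of_le (towE_pos _) hn1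
    have htkx : towE k ≤ x := (towE_le_succ k).trans hn1
    have hLn2 : 2 ≤ L n := le_logIter k htkx
    have hL0 : 0 < L n := by linarith
    have hMle : x / L n ≤ (M : ℝ) := Nat.le_ceil _
    have hMge : towE k ≤ (M : ℝ) := hn3.trans hMle
    have hM1 : 1 ≤ M := by
      have h2 : (1:ℝ) ≤ (M:ℝ) := by have := two_le_towE k; linarith
      exact_mod_cast h2
    have hMn : M ≤ n := Nat.ceil_le.mpr (div_le_self hx0.le (by linarith))
    have hMx : (M : ℝ) ≤ x := by rw [hx]; exact_mod_cast hMn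
    have hNM : N ≤ M := by
      have : (N:ℝ) ≤ (M:ℝ) := hn2.trans hMle
      exact_mod_cast this
    have hM0 : (0:ℝ) < (M:ℝ) := by have := two_le_towE k; linarith
    -- counting chain
    have hcount : (Akn k M : ℝ) * (M:ℝ) ^ (n - M) ≤ (Akn (k+1) n : ℝ) := by
      have := Akn_step k M n hM1 hMn
      exact_mod_cast this
    have hIH := hN M hNM
    have hpow : (M:ℝ) ^ (n - M) = Real.exp (((n - M : ℕ) : ℝ) * Real.log M) := by
      rw [Real.exp_nat_mul, Real.exp_log hM0]
    have hcast : ((n - M : ℕ) : ℝ) = x - (M:ℝ) := by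
      rw [Nat.cast_sub hMn]
    -- exponent inequalities
    have e1 : Real.log x - Real.log^[k+1] x ≤ Real.log (M:ℝ) := by
      have hdiv0 : 0 < x / L n := div_pos hx0 hL0
      have := Real.log_le_log hdiv0 hMle
      rw [Real.log_div hx0.ne' hL0.ne'] at this
      have hiter : Real.log^[k+1] x = Real.log (L n) := by
        rw [Function.iterate_succ_apply']
      linarith
    have e2 : (M:ℝ) * Real.log^[k] (M:ℝ) ≤ 2 * x := by
      have h1 : Real.log^[k] (M:ℝ) ≤ L n := logIter_mono k hMge hMx
      have h2 : (M:ℝ) ≤ x / L n + 1 := le_of_lt (Nat.ceil_lt_add_one (by positivity))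
      have h3 : (0:ℝ) ≤ Real.log^[k] (M:ℝ) := by have := le_logIter k hMge; linarith
      have h4 : (M:ℝ) * Real.log^[k] (M:ℝ) ≤ (x / L n + 1) * L n :=
        mul_le_mul h2 h1 h3 (by positivity)
      have h5 : (x / L n + 1) * L n = x + L n := by
        field_simp
      have h6 : L n ≤ x := logIter_le_self k htkx
      linarith
    have e3 : C * (M:ℝ) ≤ C * x := mul_le_mul_of_nonneg_left hMx hC
    have e4 : x * (Real.log x - Real.log^[k+1] x) ≤ x * Real.log (M:ℝ) :=
      mul_le_mul_of_nonneg_left e1 hx0.le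
    calc Real.exp (x * Real.log x - x * Real.log^[k+1] x - (C + 2) * x)
        ≤ Real.exp (x * Real.log (M:ℝ) - (M:ℝ) * Real.log^[k] (M:ℝ) - C * (M:ℝ)) := by
          apply Real.exp_le_exp.mpr
          nlinarith [e2, e3, e4]
      _ = Real.exp (((M:ℝ) * Real.log (M:ℝ) - (M:ℝ) * Real.log^[k] (M:ℝ) - C * (M:ℝ))
            + (x - (M:ℝ)) * Real.log (M:ℝ)) := by ring_nf
      _ = Real.exp ((M:ℝ) * Real.log (M:ℝ) - (M:ℝ) * Real.log^[k] (M:ℝ) - C * (M:ℝ))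
            * Real.exp ((x - (M:ℝ)) * Real.log (M:ℝ)) := Real.exp_add _ _
      _ ≤ (Akn k M : ℝ) * (M:ℝ) ^ (n - M) := by
          rw [hpow, hcast]
          exact mul_le_mul_of_nonneg_right hIH (Real.exp_pos _).le
      _ ≤ (Akn (k+1) n : ℝ) := hcount


/-- For every `k ≥ 3` there is `C_k` with
`A_k(n) ≥ exp(n ln n - n ln^{(k)} n - C_k n)` for all large `n`. -/
theorem increasing_trees_bounded_height_count (k : ℕ) (hk : 3 ≤ k) :
    ∃ C : ℝ, ∃ N : ℕ, ∀ n : ℕ, N ≤ n →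
      (Akn k n : ℝ) ≥
        Real.exp ((n : ℝ) * Real.log n - (n : ℝ) * Real.log^[k] n - C * n) := by
  obtain ⟨C, _, N, hN⟩ := aux_bound k (by omega)
  exact ⟨C, N, hN⟩
end

section
/- Let N be a large positive integer, s(N) = ⌊ln N⌋, d(N) = ⌊N/(s(N)+1)⌋, r(N) = N - d(N)(s(N)+1). The number P_N of ways to partition a set of N labeled elements into d(N) blocks, of which d(N)-1 have size s(N)+1 and one has size 1+s(N)+r(N) (with the formula splitting into the case r(N) = 0 where all d(N) blocks have size s(N)+1 counted with 1/d(N)! symmetry factor), satisfies ln P_N = N(ln N - ln ln N - 1 + o(1)) as N → ∞. -/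
open Filter Real

/-- `s(N) = ⌊ln N⌋`. -/
noncomputable def sFn (N : ℕ) : ℕ := ⌊Real.log N⌋₊

/-- `d(N) = ⌊N/(s(N)+1)⌋`. -/
noncomputable def dFn (N : ℕ) : ℕ := N / (sFn N + 1)

/-- `r(N) = N - d(N)(s(N)+1)`. -/
noncomputable def rFn (N : ℕ) : ℕ := N - dFn N * (sFn N + 1)

/-- The number `P_N` of partitions of `N` labeled elements into `d(N)` blocks,
`d(N)-1` of size `s(N)+1` and one of size `1+s(N)+r(N)` (with the symmetric
formula when `r(N)=0`). -/
noncomputable def PN (N : ℕ) : ℝ :=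
  if rFn N = 0 then
    (N.factorial : ℝ) / ((dFn N).factorial * ((sFn N + 1).factorial : ℝ) ^ dFn N)
  else
    (N.factorial : ℝ) /
      ((dFn N - 1).factorial * ((sFn N + 1).factorial : ℝ) ^ (dFn N - 1) *
        (1 + sFn N + rFn N).factorial)

lemma log_succ_sub_le (n : ℕ) (hn : 1 ≤ n) :
    Real.log ((n : ℝ) + 1) - Real.log n ≤ 1 / n := by
  have hn0 : (0:ℝ) < n := by exact_mod_cast hn
  have h := Real.log_le_sub_one_of_pos (x := ((n:ℝ)+1)/n) (by positivity)
  rw [Real.log_div (by positivity) hn0.ne'] at h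
  have : ((n:ℝ)+1)/n - 1 = 1/n := by field_simp; ring
  linarith [h, this.le]

lemma le_log_succ_sub (n : ℕ) (hn : 1 ≤ n) :
    1 / ((n : ℝ) + 1) ≤ Real.log ((n : ℝ) + 1) - Real.log n := by
  have hn0 : (0:ℝ) < n := by exact_mod_cast hn
  have h := Real.log_le_sub_one_of_pos (x := (n:ℝ)/((n:ℝ)+1)) (by positivity)
  rw [Real.log_div hn0.ne' (by positivity)] at h
  have : (n:ℝ)/((n:ℝ)+1) - 1 = -(1/((n:ℝ)+1)) := by field_simp; ring
  linarith [h, this.le]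

lemma log_factorial_ge (n : ℕ) :
    (n : ℝ) * Real.log n - n ≤ Real.log (n.factorial) := by
  induction n with
  | zero => simp
  | succ m ih =>
    rcases Nat.eq_zero_or_pos m with hm | hm
    · subst hm; simp
    · have hm0 : (0:ℝ) < m := by exact_mod_cast hm
      have hfact : ((m+1).factorial : ℝ) = ((m:ℝ)+1) * (m.factorial : ℝ) := by
        push_cast [Nat.factorial_succ]; ring
      have hlog : Real.log ((m+1).factorial) = Real.log ((m:ℝ)+1) + Real.log (m.factorial) := by
        rw [show (((m+1).factorial : ℕ) : ℝ) = ((m:ℝ)+1) * (m.factorial : ℝ) from by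
          push_cast [Nat.factorial_succ]; ring, Real.log_mul (by positivity)
          (by exact_mod_cast (Nat.factorial_pos m).ne')]
      have key : (m:ℝ) * (Real.log ((m:ℝ)+1) - Real.log m) ≤ 1 := by
        have := log_succ_sub_le m hm
        calc (m:ℝ) * (Real.log ((m:ℝ)+1) - Real.log m) ≤ (m:ℝ) * (1/m) :=
              mul_le_mul_of_nonneg_left this hm0.le
          _ = 1 := by field_simp
      push_cast
      rw [hlog]
      push_cast at ih
      nlinarith [ih]

lemma log_factorial_le (n : ℕ) :
    Real.log (n.factorial) ≤ (n : ℝ) * Real.log n - n + 1 + Real.log n := by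
  induction n with
  | zero => simp
  | succ m ih =>
    rcases Nat.eq_zero_or_pos m with hm | hm
    · subst hm; simp
    · have hm0 : (0:ℝ) < m := by exact_mod_cast hm
      have hlog : Real.log ((m+1).factorial) = Real.log ((m:ℝ)+1) + Real.log (m.factorial) := by
        rw [show (((m+1).factorial : ℕ) : ℝ) = ((m:ℝ)+1) * (m.factorial : ℝ) from by
          push_cast [Nat.factorial_succ]; ring, Real.log_mul (by positivity)
          (by exact_mod_cast (Nat.factorial_pos m).ne')]
      have key : 1 ≤ ((m:ℝ)+1) * (Real.log ((m:ℝ)+1) - Real.log m) := by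
        have := le_log_succ_sub m hm
        calc (1:ℝ) = ((m:ℝ)+1) * (1/((m:ℝ)+1)) := by field_simp
          _ ≤ ((m:ℝ)+1) * (Real.log ((m:ℝ)+1) - Real.log m) :=
              mul_le_mul_of_nonneg_left this (by positivity)
      push_cast
      rw [hlog]
      push_cast at ih
      nlinarith [ih]

lemma log_PN_eq (N : ℕ) (hd : 1 ≤ dFn N) :
    Real.log (PN N) = Real.log (N.factorial) - Real.log ((dFn N - 1).factorial)
      - ((dFn N : ℝ) - 1) * Real.log ((sFn N + 1).factorial)
      - Real.log ((1 + sFn N + rFn N).factorial)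
      - (if rFn N = 0 then Real.log (dFn N) else 0) := by
  have hfpos : ∀ m : ℕ, (0:ℝ) < (m.factorial : ℝ) := fun m => by
    exact_mod_cast Nat.factorial_pos m
  by_cases hr : rFn N = 0
  · rw [PN, if_pos hr, if_pos hr, hr]
    rw [Real.log_div (hfpos N).ne' (by positivity), Real.log_mul (hfpos _).ne'
      (by positivity), Real.log_pow]
    have hd' : dFn N = (dFn N - 1) + 1 := (Nat.succ_pred_eq_of_pos hd).symm
    have hfac : Real.log ((dFn N).factorial) =
        Real.log (dFn N) + Real.log ((dFn N - 1).factorial) := by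
      rw [show (((dFn N).factorial : ℕ) : ℝ) = (dFn N : ℝ) * ((dFn N - 1).factorial : ℝ) from by
        rw [hd', Nat.factorial_succ]; push_cast [← hd']; ring]
      rw [Real.log_mul ((Nat.cast_pos.mpr hd).ne' : ((dFn N:ℝ)) ≠ 0) (hfpos _).ne']
    have h1s : 1 + sFn N + 0 = sFn N + 1 := by omega
    rw [h1s, hfac]
    ring
  · rw [PN, if_neg hr, if_neg hr]
    rw [Real.log_div (hfpos N).ne' (by positivity), Real.log_mul (by positivity)
      (hfpos _).ne', Real.log_mul (hfpos _).ne' (by positivity), Real.log_pow]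
    have : ((dFn N - 1 : ℕ) : ℝ) = (dFn N : ℝ) - 1 := by
      push_cast [Nat.cast_sub hd]; ring
    rw [this]; ring

noncomputable def gg (n : ℕ) : ℝ := Real.log n.factorial - ((n:ℝ) * Real.log n - n)
noncomputable def Dr (N : ℕ) : ℝ := (dFn N : ℝ) - 1
noncomputable def Sr (N : ℕ) : ℝ := (sFn N : ℝ) + 1

noncomputable def term1 (N : ℕ) : ℝ := gg N / N
noncomputable def term2 (N : ℕ) : ℝ :=
  -(Real.log ((dFn N - 1).factorial) - (Dr N * Real.log (Dr N) - Dr N)) / N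
noncomputable def term3 (N : ℕ) : ℝ := -(Dr N * gg (sFn N + 1)) / N
noncomputable def term4 (N : ℕ) : ℝ := -Real.log ((1 + sFn N + rFn N).factorial) / N
noncomputable def term5 (N : ℕ) : ℝ := -(if rFn N = 0 then Real.log (dFn N) else 0) / N
noncomputable def term6 (N : ℕ) : ℝ := 1 - Dr N * Real.log (Dr N) / N
noncomputable def term7 (N : ℕ) : ℝ := Dr N / N
noncomputable def term8 (N : ℕ) : ℝ :=
  Real.log (Real.log N) - Dr N * Sr N * Real.log (Sr N) / N
noncomputable def term9 (N : ℕ) : ℝ := Dr N * Sr N / N - 1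

noncomputable def bnd1 (N : ℕ) : ℝ := (1 + Real.log N) / N
noncomputable def bnd3 (N : ℕ) : ℝ := (1 + Real.log (Real.log N + 1)) / Real.log N
noncomputable def bnd4 (N : ℕ) : ℝ := (2 * Real.log N + 2)^2 / N
noncomputable def bnd5 (N : ℕ) : ℝ := Real.log N / N
noncomputable def bnd6 (N : ℕ) : ℝ :=
  1 - (1 - (2 * Real.log N + 4) / N) *
    ((Real.log N - Real.log 2 - Real.log (Real.log N + 1)) / (Real.log N + 1))
noncomputable def bnd7 (N : ℕ) : ℝ := 1 / Real.log N
noncomputable def bnd8 (N : ℕ) : ℝ :=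
  Real.log (1 + 1 / Real.log N) + (2 * Real.log N + 2) * (Real.log N + 1) / N
noncomputable def bnd9 (N : ℕ) : ℝ := (2 * Real.log N + 2) / N

lemma gg_nonneg (n : ℕ) : 0 ≤ gg n := by
  have := log_factorial_ge n; simp only [gg]; linarith

lemma gg_le (n : ℕ) : gg n ≤ 1 + Real.log n := by
  have := log_factorial_le n; simp only [gg]; linarith

set_option maxHeartbeats 2000000 in
lemma all_bounds (N : ℕ) (hL5 : 5 ≤ Real.log N) (h8 : 8 * (Real.log N + 1) ≤ (N:ℝ)) :
    |term1 N| ≤ bnd1 N ∧ |term2 N| ≤ bnd1 N ∧ |term3 N| ≤ bnd3 N ∧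
    |term4 N| ≤ bnd4 N ∧ |term5 N| ≤ bnd5 N ∧ |term6 N| ≤ bnd6 N ∧
    |term7 N| ≤ bnd7 N ∧ |term8 N| ≤ bnd8 N ∧ |term9 N| ≤ bnd9 N ∧ 8 ≤ dFn N := by
  set L := Real.log N with hLdef
  have hLpos : (0:ℝ) < L := by linarith
  have hN0 : (0:ℝ) < N := by nlinarith
  have hNn : 0 < N := by exact_mod_cast hN0
  -- s facts
  have hsL : (sFn N : ℝ) ≤ L := Nat.floor_le hLpos.le
  have hLS : L < (sFn N : ℝ) + 1 := Nat.lt_floor_add_one L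
  have hSrL : L < Sr N := hLS
  have hSr1 : Sr N ≤ L + 1 := by simp only [Sr]; linarith
  have hSpos : (0:ℝ) < Sr N := lt_trans hLpos hSrL
  -- division facts (nat)
  obtain ⟨m, hm1, hm2⟩ : ∃ m, (sFn N + 1) * dFn N + m = N ∧ m < sFn N + 1 :=
    ⟨N % (sFn N + 1), Nat.div_add_mod N (sFn N + 1), Nat.mod_lt N (Nat.succ_pos _)⟩
  have hc : (sFn N + 1) * dFn N = dFn N * (sFn N + 1) := Nat.mul_comm _ _
  have hnat1 : dFn N * (sFn N + 1) + rFn N = N := by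
    simp only [rFn]; omega
  have hnat2 : rFn N < sFn N + 1 := by
    simp only [rFn]; omega
  have hid : (dFn N : ℝ) * Sr N + (rFn N : ℝ) = N := by
    simp only [Sr]; exact_mod_cast congrArg (Nat.cast : ℕ → ℝ) hnat1
  have hrS : (rFn N : ℝ) + 1 ≤ Sr N := by
    simp only [Sr]; exact_mod_cast hnat2
  have hrnn : (0:ℝ) ≤ (rFn N : ℝ) := Nat.cast_nonneg _
  -- d lower bound
  have hd8 : 8 ≤ dFn N := by
    by_contra h
    push_neg at h
    have : (dFn N : ℝ) ≤ 7 := by exact_mod_cast Nat.lt_succ_iff.mp h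
    nlinarith [hrS, hid, hSr1, hSpos]
  have hd1 : 1 ≤ dFn N := by omega
  have hDr7 : (7:ℝ) ≤ Dr N := by
    simp only [Dr]
    have : (8:ℝ) ≤ (dFn N : ℝ) := by exact_mod_cast hd8
    linarith
  have hDrpos : (0:ℝ) < Dr N := by linarith
  have hdN : (dFn N : ℝ) ≤ N := by
    exact_mod_cast Nat.div_le_self N (sFn N + 1)
  have hDrN : Dr N ≤ N := by simp only [Dr]; linarith
  have hcastD : ((dFn N - 1 : ℕ) : ℝ) = Dr N := by
    simp only [Dr]; push_cast [Nat.cast_sub hd1]; ring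
  have hlogDle : Real.log (Dr N) ≤ L := by
    rw [hLdef]; exact Real.log_le_log hDrpos hDrN
  have hlogDnn : 0 ≤ Real.log (Dr N) := Real.log_nonneg (by linarith)
  have hDreq : Dr N = (dFn N : ℝ) - 1 := rfl
  have hDrS : Dr N * Sr N ≤ (N:ℝ) := by nlinarith [hid, hSpos, hrnn, hDreq]
  have hDrL : Dr N * L ≤ (N:ℝ) := by nlinarith [hDrS, hDrpos, hSrL]
  -- numerator nonneg : L - log 2 - log (L+1) ≥ 0
  have hlog2L : Real.log 2 + Real.log (L + 1) ≤ L := by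
    have h1 : Real.log 2 + Real.log (L+1) = Real.log (2 * (L+1)) :=
      (Real.log_mul (by norm_num) (by linarith)).symm
    have h2 : (1 : ℝ) + L/2 ≤ Real.exp (L/2) := by linarith [Real.add_one_le_exp (L/2)]
    have h3 : Real.exp (L/2) * Real.exp (L/2) = Real.exp L := by
      rw [← Real.exp_add]; ring_nf
    have h4 : 2 * (L+1) ≤ Real.exp L := by nlinarith [h2, h3, Real.exp_pos (L/2)]
    have h5 : Real.log (2 * (L+1)) ≤ L := by
      calc Real.log (2 * (L+1)) ≤ Real.log (Real.exp L) :=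
            Real.log_le_log (by linarith) h4
        _ = L := Real.log_exp L
    linarith [h1, h5]
  -- log lower bound for Dr
  have hlogDge : L - Real.log 2 - Real.log (L + 1) ≤ Real.log (Dr N) := by
    have hDrlow : (N:ℝ) / Sr N - 2 ≤ Dr N := by
      have : (N:ℝ) < ((dFn N : ℝ) + 1) * Sr N := by nlinarith [hid, hrS, hSpos]
      have h2 : (N:ℝ) / Sr N < (dFn N : ℝ) + 1 := by
        rw [div_lt_iff₀ hSpos]; nlinarith
      simp only [Dr]; linarith
    have hq : (N:ℝ) / (2 * Sr N) ≤ Dr N := by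
      have hNS : 8 * Sr N ≤ (N:ℝ) := by nlinarith [hSr1]
      have h1 : (N:ℝ) / (2 * Sr N) + 2 ≤ (N:ℝ) / Sr N := by
        rw [div_add' _ _ _ (by positivity), div_le_div_iff₀ (by positivity) hSpos]
        nlinarith [hNS, hSpos]
      linarith
    have hqpos : (0:ℝ) < (N:ℝ) / (2 * Sr N) := by positivity
    calc L - Real.log 2 - Real.log (L+1)
        ≤ L - Real.log 2 - Real.log (Sr N) := by
          have : Real.log (Sr N) ≤ Real.log (L+1) := Real.log_le_log hSpos hSr1
          linarith
      _ = Real.log ((N:ℝ) / (2 * Sr N)) := by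
          rw [Real.log_div (by positivity) (by positivity), Real.log_mul (by norm_num) hSpos.ne']
          rw [hLdef]; ring
      _ ≤ Real.log (Dr N) := Real.log_le_log hqpos hq
  have hrL : (rFn N : ℝ) ≤ L := by linarith [hrS, hSr1]
  -- ======= the nine bounds =======
  refine ⟨?_, ?_, ?_, ?_, ?_, ?_, ?_, ?_, ?_, hd8⟩
  · -- term1
    rw [term1, bnd1, abs_of_nonneg (div_nonneg (gg_nonneg N) hN0.le)]
    gcongr
    exact gg_le N
  · -- term2
    have hx : Real.log ((dFn N - 1).factorial) - (Dr N * Real.log (Dr N) - Dr N)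
        = gg (dFn N - 1) := by
      rw [gg, hcastD]
    have h0 : 0 ≤ gg (dFn N - 1) := gg_nonneg _
    have h1 : gg (dFn N - 1) ≤ 1 + Real.log (Dr N) := by
      have := gg_le (dFn N - 1); rwa [hcastD] at this
    rw [term2, bnd1, neg_div, abs_neg, hx,
      abs_of_nonneg (div_nonneg h0 hN0.le)]
    gcongr
    linarith [h1, hlogDle]
  · -- term3
    have h0 : 0 ≤ gg (sFn N + 1) := gg_nonneg _
    have hgS : gg (sFn N + 1) ≤ 1 + Real.log (L + 1) := by
      have h := gg_le (sFn N + 1)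
      have hcastS : ((sFn N + 1 : ℕ) : ℝ) = Sr N := by simp [Sr]
      rw [hcastS] at h
      have : Real.log (Sr N) ≤ Real.log (L + 1) := Real.log_le_log hSpos hSr1
      linarith
    rw [term3, bnd3, neg_div, abs_neg,
      abs_of_nonneg (div_nonneg (mul_nonneg hDrpos.le h0) hN0.le),
      div_le_div_iff₀ hN0 hLpos]
    have hgnn : (0:ℝ) ≤ 1 + Real.log (L+1) :=
      le_trans h0 hgS
    calc Dr N * gg (sFn N + 1) * L = (Dr N * L) * gg (sFn N + 1) := by ring
      _ ≤ (N:ℝ) * (1 + Real.log (L + 1)) :=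
        mul_le_mul hDrL hgS h0 hN0.le
      _ = (1 + Real.log (L + 1)) * (N:ℝ) := by ring
  · -- term4
    have hm1 : 1 ≤ 1 + sFn N + rFn N := by omega
    have hm1' : (1:ℝ) ≤ ((1 + sFn N + rFn N : ℕ) : ℝ) := by exact_mod_cast hm1
    have hmle : ((1 + sFn N + rFn N : ℕ) : ℝ) ≤ 2*L + 2 := by
      push_cast; linarith [hsL, hrL]
    have hfnn : 0 ≤ Real.log ((1 + sFn N + rFn N).factorial) :=
      Real.log_nonneg (by exact_mod_cast (1 + sFn N + rFn N).factorial_pos)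
    have hkey : Real.log ((1 + sFn N + rFn N).factorial) ≤ (2*L+2)^2 := by
      set m := 1 + sFn N + rFn N with hmdef
      have h1 : Real.log (m.factorial) ≤ Real.log ((m:ℝ)^m) := by
        apply Real.log_le_log (by exact_mod_cast m.factorial_pos)
        exact_mod_cast Nat.factorial_le_pow m
      rw [Real.log_pow] at h1
      have h2 : Real.log (m:ℝ) ≤ Real.log (2*L+2) :=
        Real.log_le_log (by linarith) hmle
      have h3 : Real.log (2*L+2) ≤ 2*L+2 := by
        linarith [Real.log_le_sub_one_of_pos (show (0:ℝ) < 2*L+2 by linarith)]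
      have h4 : (0:ℝ) ≤ Real.log (m:ℝ) := Real.log_nonneg hm1'
      calc Real.log (m.factorial) ≤ (m:ℝ) * Real.log (m:ℝ) := h1
        _ ≤ (2*L+2) * (2*L+2) := mul_le_mul hmle (h2.trans h3) h4 (by linarith)
        _ = (2*L+2)^2 := by ring
    rw [term4, bnd4, neg_div, abs_neg, abs_of_nonneg (div_nonneg hfnn hN0.le)]
    gcongr
  · -- term5
    rw [term5, bnd5, neg_div, abs_neg]
    by_cases hr : rFn N = 0
    · rw [if_pos hr]
      have h0 : 0 ≤ Real.log (dFn N) := Real.log_nonneg (by exact_mod_cast hd1)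
      have h1 : Real.log (dFn N) ≤ L := by
        rw [hLdef]
        exact Real.log_le_log (by exact_mod_cast hd1) hdN
      rw [abs_of_nonneg (div_nonneg h0 hN0.le)]
      gcongr
    · rw [if_neg hr]
      simp only [zero_div, abs_zero]
      positivity
  · -- term6
    have hup : Dr N * Real.log (Dr N) ≤ (N:ℝ) := by
      calc Dr N * Real.log (Dr N) ≤ Dr N * L :=
        mul_le_mul_of_nonneg_left hlogDle hDrpos.le
        _ ≤ N := hDrL
    have ht6nn : 0 ≤ term6 N := by
      rw [term6]
      have : Dr N * Real.log (Dr N) / N ≤ 1 := by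
        rw [div_le_one hN0]; exact hup
      linarith
    rw [abs_of_nonneg ht6nn, term6, bnd6]
    have hnum : 0 ≤ L - Real.log 2 - Real.log (L + 1) := by linarith [hlog2L]
    have hfrac : 0 ≤ 1 - (2*L+4)/N := by
      rw [sub_nonneg, div_le_one hN0]; linarith
    -- key : (1 - (2L+4)/N) * ((L - log2 - log(L+1))/(L+1)) ≤ Dr N * log (Dr N) / N
    have hkey : (1 - (2*L+4)/N) * ((L - Real.log 2 - Real.log (L+1))/(L+1))
        ≤ Dr N * Real.log (Dr N) / N := by
      have ha : (1 - (2*L+4)/N) / (L+1) ≤ Dr N / N := by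
        rw [div_le_div_iff₀ (by linarith) hN0]
        have hexp : (1 - (2*L+4)/N) * N = N - (2*L+4) := by
          field_simp
        rw [hexp]
        have h1 : Dr N * Sr N = (N:ℝ) - (rFn N) - Sr N := by
          rw [hDreq]; nlinarith [hid]
        have h2 : (N:ℝ) - (2*L+4) ≤ Dr N * Sr N := by
          rw [h1]; linarith [hrL, hSr1]
        calc (N:ℝ) - (2*L+4) ≤ Dr N * Sr N := h2
          _ ≤ Dr N * (L+1) := mul_le_mul_of_nonneg_left hSr1 hDrpos.le
      calc (1 - (2*L+4)/N) * ((L - Real.log 2 - Real.log (L+1))/(L+1))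
          = ((1 - (2*L+4)/N)/(L+1)) * (L - Real.log 2 - Real.log (L+1)) := by ring
        _ ≤ (Dr N / N) * Real.log (Dr N) := by
            apply mul_le_mul ha hlogDge hnum
            positivity
        _ = Dr N * Real.log (Dr N) / N := by ring
    linarith
  · -- term7
    rw [term7, bnd7, abs_of_nonneg (div_nonneg hDrpos.le hN0.le),
      div_le_div_iff₀ hN0 hLpos]
    nlinarith [hDrL]
  · -- term8
    have hDrSeq : Dr N * Sr N = (N:ℝ) - (rFn N) - Sr N := by
      rw [hDreq]; nlinarith [hid]
    have hsplit : term8 N = (Real.log L - Real.log (Sr N))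
        + ((rFn N : ℝ) + Sr N) * Real.log (Sr N) / N := by
      rw [term8, hDrSeq, ← hLdef]
      field_simp
      ring
    have hlSnn : 0 ≤ Real.log (Sr N) := Real.log_nonneg (by linarith)
    have hlSL : Real.log L ≤ Real.log (Sr N) := Real.log_le_log hLpos hSrL.le
    have hlSup : Real.log (Sr N) ≤ Real.log (L+1) := Real.log_le_log hSpos hSr1
    have habs1 : |Real.log L - Real.log (Sr N)| ≤ Real.log (1 + 1/L) := by
      rw [abs_of_nonpos (by linarith)]
      have heq : Real.log (1 + 1/L) = Real.log (L+1) - Real.log L := by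
        rw [show (1:ℝ) + 1/L = (L+1)/L by field_simp, Real.log_div (by linarith) hLpos.ne']
      linarith
    have habs2 : |((rFn N : ℝ) + Sr N) * Real.log (Sr N) / N|
        ≤ (2*L+2) * (L+1) / N := by
      have h0 : 0 ≤ ((rFn N : ℝ) + Sr N) * Real.log (Sr N) / N := by positivity
      rw [abs_of_nonneg h0]
      have h1 : (rFn N : ℝ) + Sr N ≤ 2*L+2 := by linarith [hrL, hSr1]
      have h2 : Real.log (Sr N) ≤ L + 1 := by
        linarith [hlSup, Real.log_le_sub_one_of_pos (show (0:ℝ) < L+1 by linarith)]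
      exact (div_le_div_iff_of_pos_right hN0).mpr
        (mul_le_mul h1 h2 hlSnn (by linarith))
    rw [bnd8]
    calc |term8 N| ≤ |Real.log L - Real.log (Sr N)|
        + |((rFn N : ℝ) + Sr N) * Real.log (Sr N) / N| := by
          rw [hsplit]; exact abs_add_le _ _
      _ ≤ Real.log (1 + 1/L) + (2*L+2) * (L+1) / N := add_le_add habs1 habs2
  · -- term9
    have hDrSeq : Dr N * Sr N = (N:ℝ) - (rFn N) - Sr N := by
      rw [hDreq]; nlinarith [hid]
    have h : term9 N = -(((rFn N : ℝ) + Sr N) / N) := by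
      rw [term9, hDrSeq]; field_simp; ring
    rw [h, bnd9, abs_neg, abs_of_nonneg (by positivity)]
    exact (div_le_div_iff_of_pos_right hN0).mpr (by linarith [hrL, hSr1])

set_option maxHeartbeats 1000000 in
lemma eq_decomp (N : ℕ) (hN : 1 ≤ N) (hd : 1 ≤ dFn N) :
    (Real.log (PN N) - (N:ℝ) * (Real.log N - Real.log (Real.log N) - 1)) / N
      = term1 N + term2 N + term3 N + term4 N + term5 N + term6 N + term7 N
        + term8 N + term9 N := by
  have hN0 : ((N:ℝ)) ≠ 0 := Nat.cast_ne_zero.mpr (by omega)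
  rw [log_PN_eq N hd]
  simp only [term1, term2, term3, term4, term5, term6, term7, term8, term9, gg, Dr, Sr]
  push_cast
  field_simp
  ring

lemma hcast : Tendsto (fun N : ℕ => (N:ℝ)) atTop atTop := tendsto_natCast_atTop_atTop

lemma hlogN : Tendsto (fun N : ℕ => Real.log N) atTop atTop :=
  Real.tendsto_log_atTop.comp hcast

lemma hinvN : Tendsto (fun N : ℕ => 1 / (N:ℝ)) atTop (nhds 0) := by
  simpa [one_div, Function.comp_def] using tendsto_inv_atTop_zero.comp hcast

lemma hLoverN : Tendsto (fun N : ℕ => Real.log N / N) atTop (nhds 0) :=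
  (Real.isLittleO_log_id_atTop.comp_tendsto hcast).tendsto_div_nhds_zero

lemma hlogdiv : Tendsto (fun x : ℝ => Real.log x / x) atTop (nhds 0) :=
  Real.isLittleO_log_id_atTop.tendsto_div_nhds_zero

lemma hL2overN : Tendsto (fun N : ℕ => (Real.log N)^2 / N) atTop (nhds 0) := by
  have h := ((isLittleO_log_rpow_rpow_atTop 2 one_pos).comp_tendsto
    hcast).tendsto_div_nhds_zero
  refine h.congr fun N => ?_
  simp only [Function.comp]
  rw [show (2:ℝ) = ((2:ℕ):ℝ) by norm_num, Real.rpow_natCast, Real.rpow_one]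

lemma hinvL : Tendsto (fun N : ℕ => 1 / Real.log N) atTop (nhds 0) := by
  simpa [one_div, Function.comp_def] using tendsto_inv_atTop_zero.comp hlogN

lemma hlogshift : Tendsto (fun x : ℝ => Real.log (x+1) / (x+1)) atTop (nhds 0) :=
  hlogdiv.comp (tendsto_atTop_add_const_right _ 1 tendsto_id)

lemma hinvshift : Tendsto (fun x : ℝ => 1 / (x+1)) atTop (nhds 0) := by
  simpa [one_div, Function.comp_def] using tendsto_inv_atTop_zero.comp
    (tendsto_atTop_add_const_right _ 1 (tendsto_id (α := ℝ)))

lemma l1 : Tendsto bnd1 atTop (nhds 0) := by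
  have := hinvN.add hLoverN
  simp only [add_zero] at this
  exact this.congr fun N => by rw [bnd1, add_div]

lemma l3 : Tendsto bnd3 atTop (nhds 0) := by
  have hv : Tendsto (fun x : ℝ => (1 + Real.log (x+1)) / x) atTop (nhds 0) := by
    have h2 : Tendsto (fun x : ℝ => (x+1)/x) atTop (nhds 1) := by
      have := (tendsto_const_nhds (x := (1:ℝ)) (f := atTop)).add
        (by simpa [one_div] using tendsto_inv_atTop_zero (𝕜 := ℝ))
      simp only [add_zero] at this
      refine (this.congr' ?_)
      filter_upwards [eventually_gt_atTop (0:ℝ)] with x hx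
      field_simp
    have h3 : Tendsto (fun x : ℝ => Real.log (x+1) / (x+1) * ((x+1)/x)) atTop
        (nhds 0) := by
      have := hlogshift.mul h2
      simpa using this
    have h4 : Tendsto (fun x : ℝ => 1/x + Real.log (x+1) / x) atTop (nhds 0) := by
      have h5 : Tendsto (fun x : ℝ => 1/x) atTop (nhds 0) := by
        simpa [one_div] using tendsto_inv_atTop_zero (𝕜 := ℝ)
      have h6 : Tendsto (fun x : ℝ => Real.log (x+1) / x) atTop (nhds 0) := by
        refine h3.congr' ?_
        filter_upwards [eventually_gt_atTop (0:ℝ)] with x hx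
        field_simp
      simpa using h5.add h6
    exact h4.congr fun x => by rw [add_div]
  exact (hv.comp hlogN).congr fun N => by rw [bnd3]; rfl

lemma l4 : Tendsto bnd4 atTop (nhds 0) := by
  have := ((hL2overN.const_mul 4).add ((hLoverN.const_mul 8).add (hinvN.const_mul 4)))
  simp only [mul_zero, add_zero] at this
  exact this.congr fun N => by rw [bnd4]; ring

lemma l9 : Tendsto bnd9 atTop (nhds 0) := by
  have := (hLoverN.const_mul 2).add (hinvN.const_mul 2)
  simp only [mul_zero, add_zero] at this
  exact this.congr fun N => by rw [bnd9]; ring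

lemma hvlim : Tendsto (fun x : ℝ =>
    (x - Real.log 2 - Real.log (x+1)) / (x+1)) atTop (nhds 1) := by
  have h1 : Tendsto (fun x : ℝ => x/(x+1)) atTop (nhds 1) := by
    have := (tendsto_const_nhds (x := (1:ℝ)) (f := atTop)).sub hinvshift
    simp only [sub_zero] at this
    refine this.congr' ?_
    filter_upwards [eventually_gt_atTop (0:ℝ)] with x hx
    field_simp; ring
  have h2 : Tendsto (fun x : ℝ => Real.log 2 / (x+1)) atTop (nhds 0) := by
    simpa [div_eq_mul_inv] using hinvshift.const_mul (Real.log 2)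
  have h3 := (h1.sub h2).sub hlogshift
  simp only [sub_zero] at h3
  exact h3.congr fun x => by rw [sub_div, sub_div]
  -- careful: log 2/(x+1) as written
lemma l6 : Tendsto bnd6 atTop (nhds 0) := by
  have hu : Tendsto (fun N : ℕ => (2*Real.log N + 4)/N) atTop (nhds 0) := by
    have := (hLoverN.const_mul 2).add (hinvN.const_mul 4)
    simp only [mul_zero, add_zero] at this
    exact this.congr fun N => by ring
  have h := (tendsto_const_nhds (x := (1:ℝ)) (f := atTop)).sub
    (((tendsto_const_nhds (x := (1:ℝ)) (f := atTop)).sub hu).mul (hvlim.comp hlogN))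
  norm_num at h
  exact h.congr fun N => by rw [bnd6]

lemma l7 : Tendsto bnd7 atTop (nhds 0) := hinvL

lemma l8 : Tendsto bnd8 atTop (nhds 0) := by
  have hpart1 : Tendsto (fun N : ℕ => Real.log (1 + 1/Real.log N)) atTop (nhds 0) := by
    have h0 : Tendsto (fun N : ℕ => 1 + 1/Real.log N) atTop (nhds 1) := by
      have := (tendsto_const_nhds (x := (1:ℝ)) (f := atTop)).add hinvL
      simpa using this
    have := ((Real.continuousAt_log one_ne_zero).tendsto).comp h0
    simpa [Real.log_one, Function.comp_def] using this
  have hpart2 : Tendsto (fun N : ℕ => (2*Real.log N + 2)*(Real.log N + 1)/N) atTop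
      (nhds 0) := by
    have := (hL2overN.const_mul 2).add ((hLoverN.const_mul 4).add (hinvN.const_mul 2))
    simp only [mul_zero, add_zero] at this
    exact this.congr fun N => by ring
  have hs := hpart1.add hpart2
  simp only [add_zero] at hs
  exact hs.congr fun N => by rw [bnd8]

lemma l5 : Tendsto bnd5 atTop (nhds 0) := hLoverN


/-- `ln P_N = N(ln N - ln ln N - 1 + o(1))` as `N → ∞`. -/
theorem PN_asymptotics :
    (fun N : ℕ =>
        Real.log (PN N) - (N : ℝ) * (Real.log N - Real.log (Real.log N) - 1))
      =o[Filter.atTop] fun N : ℕ => (N : ℝ) := by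
  have hside : ∀ᶠ N : ℕ in atTop, ((N:ℝ) = 0 →
      Real.log (PN N) - (N : ℝ) * (Real.log N - Real.log (Real.log N) - 1) = 0) := by
    filter_upwards [eventually_ge_atTop 1] with N hN h
    exact absurd h (Nat.cast_ne_zero.mpr (by omega))
  rw [Asymptotics.isLittleO_iff_tendsto' hside]
  have hev5 : ∀ᶠ N : ℕ in atTop, 5 ≤ Real.log N := hlogN.eventually_ge_atTop 5
  have hev8 : ∀ᶠ N : ℕ in atTop, 8 * (Real.log N + 1) ≤ (N:ℝ) := by
    have h0 : Tendsto (fun N : ℕ => (Real.log N + 1)/N) atTop (nhds 0) := by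
      have := hLoverN.add hinvN
      simp only [add_zero] at this
      exact this.congr fun N => by rw [add_div]
    filter_upwards [h0.eventually (gt_mem_nhds (show (0:ℝ) < 1/8 by norm_num)),
      eventually_ge_atTop 1] with N h1 h2
    have hN0 : (0:ℝ) < N := by
      have : (1:ℝ) ≤ N := by exact_mod_cast h2
      linarith
    rw [div_lt_iff₀ hN0] at h1
    nlinarith
  have hB := (hev5.and hev8).mono (fun N h => all_bounds N h.1 h.2)
  have t1 : Tendsto term1 atTop (nhds 0) :=
    squeeze_zero_norm' (hB.mono fun N h => by
      simpa [Real.norm_eq_abs] using h.1) l1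
  have t2 : Tendsto term2 atTop (nhds 0) :=
    squeeze_zero_norm' (hB.mono fun N h => by
      simpa [Real.norm_eq_abs] using h.2.1) l1
  have t3 : Tendsto term3 atTop (nhds 0) :=
    squeeze_zero_norm' (hB.mono fun N h => by
      simpa [Real.norm_eq_abs] using h.2.2.1) l3
  have t4 : Tendsto term4 atTop (nhds 0) :=
    squeeze_zero_norm' (hB.mono fun N h => by
      simpa [Real.norm_eq_abs] using h.2.2.2.1) l4
  have t5 : Tendsto term5 atTop (nhds 0) :=
    squeeze_zero_norm' (hB.mono fun N h => by
      simpa [Real.norm_eq_abs] using h.2.2.2.2.1) l5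
  have t6 : Tendsto term6 atTop (nhds 0) :=
    squeeze_zero_norm' (hB.mono fun N h => by
      simpa [Real.norm_eq_abs] using h.2.2.2.2.2.1) l6
  have t7 : Tendsto term7 atTop (nhds 0) :=
    squeeze_zero_norm' (hB.mono fun N h => by
      simpa [Real.norm_eq_abs] using h.2.2.2.2.2.2.1) l7
  have t8 : Tendsto term8 atTop (nhds 0) :=
    squeeze_zero_norm' (hB.mono fun N h => by
      simpa [Real.norm_eq_abs] using h.2.2.2.2.2.2.2.1) l8
  have t9 : Tendsto term9 atTop (nhds 0) :=
    squeeze_zero_norm' (hB.mono fun N h => by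
      simpa [Real.norm_eq_abs] using h.2.2.2.2.2.2.2.2.1) l9
  have hsum := ((((((((t1.add t2).add t3).add t4).add t5).add t6).add t7).add t8).add t9)
  simp only [add_zero] at hsum
  apply Tendsto.congr' _ hsum
  filter_upwards [hB, eventually_ge_atTop 1] with N h hN1
  exact (eq_decomp N hN1 (le_trans (by norm_num) h.2.2.2.2.2.2.2.2.2)).symm
end

section
/- Let ξ_1,...,ξ_n be {0,1}-valued random variables such that for some p ∈ (0,1) and every subset S ⊆ {1,...,n}, P(ξ_i = 1 for all i ∈ S) ≤ p^{|S|}. Then for any γ ∈ (p, 1], P(∑_{i=1}^n ξ_i ≥ γn) ≤ exp(-n·D(γ‖p)), where D(γ‖p) = γ ln(γ/p) + (1-γ) ln((1-γ)/(1-p)). -/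
open MeasureTheory Finset


lemma chernoff_mgf {Ω : Type*} [MeasurableSpace Ω]
    (μ : Measure Ω) (n : ℕ) (ξ : Fin n → Ω → ℕ)
    (hmeas : ∀ i, Measurable (ξ i)) (hbool : ∀ i ω, ξ i ω = 0 ∨ ξ i ω = 1)
    (p : ℝ) (hp : 0 ≤ p) (hneg : ∀ S : Finset (Fin n),
      μ {ω | ∀ i ∈ S, ξ i ω = 1} ≤ ENNReal.ofReal (p ^ S.card))
    (l : ℝ) (hl : 0 ≤ l) :
    ∫⁻ ω, ENNReal.ofReal (∏ i, (1 + l * (ξ i ω : ℝ))) ∂μ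
      ≤ ENNReal.ofReal ((1 + l * p) ^ n) := by
  have hcast : ∀ i, Measurable (fun ω => (ξ i ω : ℝ)) := fun i =>
    measurable_from_nat.comp (hmeas i)
  have hmt : ∀ t : Finset (Fin n), Measurable (fun ω => ∏ i ∈ t, (ξ i ω : ℝ)) := by
    intro t
    exact Finset.measurable_prod t (fun i _ => hcast i)
  have hprodnn : ∀ (t : Finset (Fin n)) ω, (0:ℝ) ≤ ∏ i ∈ t, (ξ i ω : ℝ) := by
    intro t ω; exact Finset.prod_nonneg (fun i _ => by positivity)
  -- expansion
  have hexp : ∀ ω, (∏ i, (1 + l * (ξ i ω : ℝ)))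
      = ∑ t ∈ (univ : Finset (Fin n)).powerset, l ^ t.card * ∏ i ∈ t, (ξ i ω : ℝ) := by
    intro ω
    calc ∏ i, (1 + l * (ξ i ω : ℝ)) = ∏ i, (l * (ξ i ω : ℝ) + 1) := by
          simp [add_comm]
      _ = ∑ t ∈ (univ : Finset (Fin n)).powerset,
            (∏ i ∈ t, l * (ξ i ω : ℝ)) * ∏ i ∈ univ \ t, 1 :=
          Finset.prod_add _ _ _
      _ = ∑ t ∈ (univ : Finset (Fin n)).powerset, l ^ t.card * ∏ i ∈ t, (ξ i ω : ℝ) := by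
          refine Finset.sum_congr rfl fun t _ => ?_
          simp [Finset.prod_mul_distrib]
  -- lintegral of each term
  have hterm : ∀ t : Finset (Fin n),
      ∫⁻ ω, ENNReal.ofReal (l ^ t.card * ∏ i ∈ t, (ξ i ω : ℝ)) ∂μ
        ≤ ENNReal.ofReal ((l * p) ^ t.card) := by
    intro t
    have hA : MeasurableSet {ω | ∀ i ∈ t, ξ i ω = 1} := by
      have : {ω | ∀ i ∈ t, ξ i ω = 1} = ⋂ i ∈ t, (ξ i) ⁻¹' {1} := by
        ext ω; simp [Set.mem_iInter]
      rw [this]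
      exact MeasurableSet.biInter t.countable_toSet fun i _ => (hmeas i) (measurableSet_singleton 1)
    have hind : ∀ ω, ENNReal.ofReal (∏ i ∈ t, (ξ i ω : ℝ))
        = Set.indicator {ω | ∀ i ∈ t, ξ i ω = 1} 1 ω := by
      intro ω
      by_cases h : ∀ i ∈ t, ξ i ω = 1
      · rw [Set.indicator_of_mem (show ω ∈ {ω | ∀ i ∈ t, ξ i ω = 1} from h)]
        have : ∀ i ∈ t, ((ξ i ω : ℝ)) = 1 := fun i hi => by rw [h i hi]; norm_num
        rw [Finset.prod_congr rfl this]
        simp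
      · rw [Set.indicator_of_notMem (show ω ∉ {ω | ∀ i ∈ t, ξ i ω = 1} from h)]
        push_neg at h
        obtain ⟨i, hi, hne⟩ := h
        have h0 : ξ i ω = 0 := (hbool i ω).resolve_right hne
        have : (∏ i ∈ t, (ξ i ω : ℝ)) = 0 :=
          Finset.prod_eq_zero hi (by rw [h0]; norm_num)
        simp [this]
    calc ∫⁻ ω, ENNReal.ofReal (l ^ t.card * ∏ i ∈ t, (ξ i ω : ℝ)) ∂μ
        = ∫⁻ ω, ENNReal.ofReal (l ^ t.card) * ENNReal.ofReal (∏ i ∈ t, (ξ i ω : ℝ)) ∂μ := by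
          simp_rw [ENNReal.ofReal_mul (by positivity : (0:ℝ) ≤ l ^ t.card)]
      _ = ENNReal.ofReal (l ^ t.card) * ∫⁻ ω, ENNReal.ofReal (∏ i ∈ t, (ξ i ω : ℝ)) ∂μ := by
          rw [lintegral_const_mul _ (Measurable.ennreal_ofReal (hmt t))]
      _ = ENNReal.ofReal (l ^ t.card) * μ {ω | ∀ i ∈ t, ξ i ω = 1} := by
          rw [show (fun ω => ENNReal.ofReal (∏ i ∈ t, (ξ i ω : ℝ)))
              = Set.indicator {ω | ∀ i ∈ t, ξ i ω = 1} 1 from funext hind,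
            lintegral_indicator_one hA]
      _ ≤ ENNReal.ofReal (l ^ t.card) * ENNReal.ofReal (p ^ t.card) :=
          mul_le_mul_right (hneg t) _
      _ = ENNReal.ofReal ((l * p) ^ t.card) := by
          rw [← ENNReal.ofReal_mul (by positivity), mul_pow]
  -- put together
  calc ∫⁻ ω, ENNReal.ofReal (∏ i, (1 + l * (ξ i ω : ℝ))) ∂μ
      = ∫⁻ ω, ∑ t ∈ (univ : Finset (Fin n)).powerset,
          ENNReal.ofReal (l ^ t.card * ∏ i ∈ t, (ξ i ω : ℝ)) ∂μ := by
        refine lintegral_congr fun ω => ?_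
        rw [hexp ω, ENNReal.ofReal_sum_of_nonneg]
        intro t _
        have := hprodnn t ω
        positivity
    _ = ∑ t ∈ (univ : Finset (Fin n)).powerset,
          ∫⁻ ω, ENNReal.ofReal (l ^ t.card * ∏ i ∈ t, (ξ i ω : ℝ)) ∂μ := by
        refine lintegral_finset_sum _ fun t _ => ?_
        exact ENNReal.measurable_ofReal.comp (((hmt t).const_mul _))
    _ ≤ ∑ t ∈ (univ : Finset (Fin n)).powerset, ENNReal.ofReal ((l * p) ^ t.card) :=
        Finset.sum_le_sum fun t _ => hterm t
    _ = ENNReal.ofReal (∑ t ∈ (univ : Finset (Fin n)).powerset, (l * p) ^ t.card) := by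
        rw [ENNReal.ofReal_sum_of_nonneg]
        intro t _; positivity
    _ = ENNReal.ofReal ((1 + l * p) ^ n) := by
        congr 1
        have := Finset.prod_add (fun _ : Fin n => l * p) (fun _ => (1:ℝ)) univ
        simp only [Finset.prod_const, one_pow, mul_one] at this
        rw [← this]
        simp [Finset.card_univ, add_comm]


/-- Generalized Chernoff bound for negatively correlated Boolean variables:
if `P(ξ_i = 1 ∀ i ∈ S) ≤ p^{|S|}` for every `S`, then for `γ ∈ (p, 1]`,
`P(∑ ξ_i ≥ γn) ≤ exp(-n D(γ‖p))`. -/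
theorem generalized_chernoff {Ω : Type*} [MeasurableSpace Ω]
    (μ : Measure Ω) [IsProbabilityMeasure μ] (n : ℕ) (ξ : Fin n → Ω → ℕ)
    (hmeas : ∀ i, Measurable (ξ i)) (hbool : ∀ i ω, ξ i ω = 0 ∨ ξ i ω = 1)
    (p : ℝ) (hp0 : 0 < p) (hp1 : p < 1)
    (hneg : ∀ S : Finset (Fin n),
      μ {ω | ∀ i ∈ S, ξ i ω = 1} ≤ ENNReal.ofReal (p ^ S.card))
    (γ : ℝ) (hγp : p < γ) (hγ1 : γ ≤ 1) :
    μ {ω | γ * n ≤ (∑ i, ξ i ω : ℝ)} ≤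
      ENNReal.ofReal
        (Real.exp (-(n : ℝ) *
          (γ * Real.log (γ / p) + (1 - γ) * Real.log ((1 - γ) / (1 - p))))) := by
  have hγ0 : 0 < γ := hp0.trans hγp
  rcases eq_or_lt_of_le hγ1 with hγeq | hγlt
  · -- γ = 1 case
    subst hγeq
    have hsub : {ω | (1:ℝ) * n ≤ (∑ i, ξ i ω : ℝ)} ⊆ {ω | ∀ i ∈ (univ : Finset (Fin n)), ξ i ω = 1} := by
      intro ω hω i _
      simp only [Set.mem_setOf_eq, one_mul] at hω
      by_contra hne
      have h0 : ξ i ω = 0 := (hbool i ω).resolve_right hne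
      have hle : (∑ j, (ξ j ω : ℝ)) ≤ ∑ j, (if j = i then 0 else 1 : ℝ) := by
        refine Finset.sum_le_sum fun j _ => ?_
        by_cases hj : j = i
        · subst hj; simp [h0]
        · simp only [hj, if_false]
          rcases hbool j ω with h | h <;> simp [h]
      have hval : (∑ j, (if j = i then 0 else 1 : ℝ)) = (n : ℝ) - 1 := by
        have he : ∀ j : Fin n, (if j = i then (0:ℝ) else 1) = 1 - (if j = i then 1 else 0) := by
          intro j; by_cases h : j = i <;> simp [h]
        rw [Finset.sum_congr rfl fun j _ => he j, Finset.sum_sub_distrib,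
          Finset.sum_ite_eq' univ i (fun _ => (1:ℝ))]
        simp
      rw [hval] at hle
      linarith
    calc μ {ω | (1:ℝ) * n ≤ (∑ i, ξ i ω : ℝ)}
        ≤ μ {ω | ∀ i ∈ (univ : Finset (Fin n)), ξ i ω = 1} := measure_mono hsub
      _ ≤ ENNReal.ofReal (p ^ (univ : Finset (Fin n)).card) := hneg univ
      _ = ENNReal.ofReal (Real.exp (-(n : ℝ) *
          ((1:ℝ) * Real.log (1 / p) + (1 - 1) * Real.log ((1 - 1) / (1 - p))))) := by
        congr 1
        rw [Real.log_div one_ne_zero (ne_of_gt hp0)]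
        simp only [sub_self, Real.log_one, one_mul, zero_mul, add_zero, zero_div, Real.log_zero]
        rw [show -(n:ℝ) * (0 - Real.log p) = (n:ℝ) * Real.log p by ring, Real.exp_nat_mul,
          Real.exp_log hp0, Finset.card_univ, Fintype.card_fin]
  · have key : ∀ l : ℝ, 0 ≤ l → ∫⁻ ω, ENNReal.ofReal (∏ i, (1 + l * (ξ i ω : ℝ))) ∂μ
        ≤ ENNReal.ofReal ((1 + l * p) ^ n) := fun l hl =>
      chernoff_mgf μ n ξ hmeas hbool p hp0.le hneg l hl
    have h1γ : 0 < 1 - γ := by linarith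
    have h1p : 0 < 1 - p := by linarith
    set l : ℝ := (γ - p) / (p * (1 - γ)) with hl_def
    have hl : 0 < l := div_pos (by linarith) (by positivity)
    set a : ℝ := 1 + l with ha_def
    set b : ℝ := 1 + l * p with hb_def
    have ha1 : 1 < a := by rw [ha_def]; linarith
    have ha0 : 0 < a := by linarith
    have hb0 : 0 < b := by rw [hb_def]; nlinarith
    have haval : a = γ * (1 - p) / (p * (1 - γ)) := by
      rw [ha_def, hl_def]; field_simp; ring
    have hbval : b = (1 - p) / (1 - γ) := by
      rw [hb_def, hl_def]; field_simp; ring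
    have hkey := key l hl.le
    -- pointwise identity
    have hpt : ∀ ω, (∏ i, (1 + l * (ξ i ω : ℝ))) = a ^ (∑ i, ξ i ω) := by
      intro ω
      rw [← Finset.prod_pow_eq_pow_sum]
      refine Finset.prod_congr rfl fun i _ => ?_
      rcases hbool i ω with h | h <;> simp [h, ha_def]
    set f : Ω → ENNReal := fun ω => ENNReal.ofReal (∏ i, (1 + l * (ξ i ω : ℝ))) with hf_def
    have hfm : Measurable f := by
      apply Measurable.ennreal_ofReal
      exact Finset.measurable_prod _ fun i _ =>
        ((measurable_from_nat.comp (hmeas i)).const_mul l).const_add 1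
    set ε : ENNReal := ENNReal.ofReal (a ^ (γ * (n : ℝ))) with hε_def
    have hεr : (0:ℝ) < a ^ (γ * (n : ℝ)) := Real.rpow_pos_of_pos ha0 _
    have hε0 : ε ≠ 0 := by rw [hε_def]; simpa using hεr
    have hεtop : ε ≠ ⊤ := ENNReal.ofReal_ne_top
    have hsub : {ω | γ * n ≤ (∑ i, ξ i ω : ℝ)} ⊆ {ω | ε ≤ f ω} := by
      intro ω hω
      simp only [Set.mem_setOf_eq] at hω ⊢
      rw [hε_def, hf_def]
      apply ENNReal.ofReal_le_ofReal
      rw [hpt ω, ← Real.rpow_natCast a (∑ i, ξ i ω)]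
      apply (Real.rpow_le_rpow_left_iff ha1).mpr
      push_cast
      exact hω
    have markov := mul_meas_ge_le_lintegral₀ (μ := μ) hfm.aemeasurable ε
    calc μ {ω | γ * n ≤ (∑ i, ξ i ω : ℝ)}
        ≤ μ {ω | ε ≤ f ω} := measure_mono hsub
      _ ≤ ENNReal.ofReal (b ^ n) / ε := by
          rw [ENNReal.le_div_iff_mul_le (Or.inl hε0) (Or.inl hεtop)]
          calc μ {ω | ε ≤ f ω} * ε = ε * μ {ω | ε ≤ f ω} := mul_comm _ _
            _ ≤ ∫⁻ ω, f ω ∂μ := markov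
            _ ≤ ENNReal.ofReal (b ^ n) := hkey
      _ = ENNReal.ofReal (b ^ n / a ^ (γ * (n : ℝ))) := by
          rw [ENNReal.ofReal_div_of_pos hεr]
      _ = ENNReal.ofReal (Real.exp (-(n : ℝ) *
            (γ * Real.log (γ / p) + (1 - γ) * Real.log ((1 - γ) / (1 - p))))) := by
          congr 1
          have l1 : Real.log (γ / p) = Real.log γ - Real.log p :=
            Real.log_div hγ0.ne' hp0.ne'
          have l2 : Real.log ((1 - γ) / (1 - p)) = Real.log (1 - γ) - Real.log (1 - p) :=
            Real.log_div h1γ.ne' h1p.ne'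
          have l3 : Real.log b = Real.log (1 - p) - Real.log (1 - γ) := by
            rw [hbval]; exact Real.log_div h1p.ne' h1γ.ne'
          have l4 : Real.log a = Real.log γ + Real.log (1 - p) -
              (Real.log p + Real.log (1 - γ)) := by
            rw [haval, Real.log_div (by positivity) (by positivity),
              Real.log_mul hγ0.ne' h1p.ne', Real.log_mul hp0.ne' h1γ.ne']
          rw [Real.rpow_def_of_pos ha0,
            show b ^ n = Real.exp ((n : ℝ) * Real.log b) by
              rw [Real.exp_nat_mul, Real.exp_log hb0],
            ← Real.exp_sub]
          congr 1
          rw [l1, l2, l3, l4]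
          ring
end
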